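/- arXiv:2207.08238 — 3 statements merged into one kernel-verified Lean document; each statement's English description precedes it below -/
import Mathlib

section
/- Let A ⊆ M and let μ ∈ 𝔐_x(M), ν ∈ 𝔐_y(M), η ∈ 𝔐_z(M) be global Keisler measures. If μ ≥_{E,A} ν and ν ≥_{E,A} η, then μ ≥_{E,A} η. -/
open FirstOrder

/-- A Keisler measure over the parameter set `A`, in the variables indexed by `α`:
a finitely additive probability measure on the Boolean algebra of `A`-definable
subsets of `M^α` (i.e. on `L_α(A)`).  The function `toFun` is defined on all sets,
but only its values on `A`-definable sets are constrained (and relevant). -/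
structure KeislerMeasure (L : FirstOrder.Language) (M : Type*) [L.Structure M]
    (A : Set M) (α : Type*) where
  toFun : Set (α → M) → ℝ
  measure_univ : toFun Set.univ = 1
  nonneg' : ∀ s : Set (α → M), A.Definable L s → 0 ≤ toFun s
  compl' : ∀ s : Set (α → M), A.Definable L s → toFun sᶜ = 1 - toFun s
  union_inter' : ∀ s t : Set (α → M), A.Definable L s → A.Definable L t →
    toFun (s ∪ t) = toFun s + toFun t - toFun (s ∩ t)

/-- Pull back a set of variable assignments along a variable reindexing map:
for `S ⊆ M^α` and `f : α → β`, `cyl f S ⊆ M^β` is the corresponding cylinder.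
E.g. `cyl Sum.inl X = X × M^β` inside `M^(α ⊕ β)`. -/
def cyl {M : Type*} {α β : Type*} (f : α → β) (S : Set (α → M)) : Set (β → M) :=
  {g : β → M | (fun a => g (f a)) ∈ S}

/-- The product `X × Y` of a set in variables `α` and a set in variables `β`,
viewed inside the variables `α ⊕ β`. -/
def prodSet {M : Type*} {α β : Type*} (X : Set (α → M)) (Y : Set (β → M)) :
    Set (α ⊕ β → M) :=
  cyl Sum.inl X ∩ cyl Sum.inr Y

/-- The extension space `E(λ, μ)`: all global Keisler measures `ω` in the
variables `α ⊕ β` whose restriction to `A`-definable sets is `λ` and whose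
marginal `π_α(ω)` is `μ`. -/
def extSpace (L : FirstOrder.Language) {M : Type*} [L.Structure M] (A : Set M)
    {α β : Type*} (lam : KeislerMeasure L M A (α ⊕ β))
    (mu : KeislerMeasure L M (Set.univ : Set M) α) :
    Set (KeislerMeasure L M (Set.univ : Set M) (α ⊕ β)) :=
  {om | (∀ s : Set (α ⊕ β → M), A.Definable L s → om.toFun s = lam.toFun s) ∧
    (∀ X : Set (α → M), (Set.univ : Set M).Definable L X →
      om.toFun (cyl Sum.inl X) = mu.toFun X)}

/-- `μ` extension dominates `ν` over `A` (written `μ ≥_{E,A} ν`): there is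
`λ ∈ 𝔐_{αβ}(A)` with `π_α(λ) = μ|_A` such that `π_β(ω) = ν` for every
`ω ∈ E(λ, μ)`. -/
def ExtDomOver (L : FirstOrder.Language) {M : Type*} [L.Structure M] (A : Set M)
    {α β : Type*} (mu : KeislerMeasure L M (Set.univ : Set M) α)
    (nu : KeislerMeasure L M (Set.univ : Set M) β) : Prop :=
  ∃ lam : KeislerMeasure L M A (α ⊕ β),
    (∀ X : Set (α → M), A.Definable L X →
      lam.toFun (cyl Sum.inl X) = mu.toFun X) ∧
    ∀ om ∈ extSpace L A lam mu, ∀ Y : Set (β → M),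
      (Set.univ : Set M).Definable L Y → om.toFun (cyl Sum.inr Y) = nu.toFun Y



section Basics

variable {L : FirstOrder.Language} {M : Type*} [L.Structure M]

/-- Definability of a cylinder (preimage under variable reindexing). -/
theorem definable_cyl {A : Set M} {α β : Type*} (f : α → β) {S : Set (α → M)}
    (h : A.Definable L S) : A.Definable L (cyl f S) :=
  h.preimage_comp f

/-- Projections (images under `· ∘ Sum.inl`) of definable sets are definable,
for arbitrary index types, provided `M` is nonempty. -/
theorem definable_image_comp_sum_inl [Nonempty M] {A : Set M} {α κ : Type*}
    {s : Set (α ⊕ κ → M)} (h : A.Definable L s) :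
    A.Definable L ((fun g : α ⊕ κ → M => g ∘ Sum.inl) '' s) := by
  classical
  obtain ⟨φ, rfl⟩ := h
  set F := φ.freeVarFinset with hF
  let K : Finset κ := F.preimage Sum.inr Sum.inr_injective.injOn
  let e : {x // x ∈ K} ≃ Fin K.card := K.equivFin
  -- relabeling of the free variables
  let r : (↑(↑F : Set (α ⊕ κ)) : Type _) → α ⊕ Fin K.card := fun u =>
    match u with
    | ⟨Sum.inl a, _⟩ => Sum.inl a
    | ⟨Sum.inr k, hk⟩ => Sum.inr (e ⟨k, Finset.mem_preimage.2 hk⟩)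
  let ψ : L[[A]].Formula (α ⊕ Fin K.card) :=
    Language.Formula.relabel r
      (φ.restrictFreeVar (Set.inclusion (Set.Subset.refl (↑F : Set (α ⊕ κ)))))
  have key : ∀ (v : α ⊕ κ → M) (W : α ⊕ Fin K.card → M),
      (∀ u : (↑(↑F : Set (α ⊕ κ)) : Type _), W (r u) = v u.1) →
      (ψ.Realize W ↔ φ.Realize v) := by
    intro v W hWv
    have h1 : (ψ.Realize W) ↔
        ((φ.restrictFreeVar (Set.inclusion (Set.Subset.refl (↑F : Set (α ⊕ κ))))).Realize
          (W ∘ r) (default : Fin 0 → M)) := by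
      exact Language.Formula.realize_relabel
    rw [h1]
    have h2 : W ∘ r = v ∘ (Subtype.val) := by
      funext u; exact hWv u
    rw [h2]
    exact Language.BoundedFormula.realize_restrictFreeVar' _
  have himg : ((fun g : α ⊕ κ → M => g ∘ Sum.inl) '' (Set.ofPred φ.Realize)) =
      ((fun g : α ⊕ Fin K.card → M => g ∘ Sum.inl) '' (Set.ofPred ψ.Realize)) := by
    ext x
    constructor
    · rintro ⟨v, hv, rfl⟩
      refine ⟨Sum.elim (v ∘ Sum.inl) (fun i => v (Sum.inr (e.symm i).1)), ?_, rfl⟩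
      rw [Set.mem_setOf_eq, key v _ ?_]
      · exact hv
      · rintro ⟨(a | k), hu⟩
        · rfl
        · show (v (Sum.inr (e.symm (e _)).1)) = v (Sum.inr k)
          rw [Equiv.symm_apply_apply]
    · rintro ⟨W, hW, rfl⟩
      obtain ⟨m₀⟩ := ‹Nonempty M›
      refine ⟨Sum.elim (W ∘ Sum.inl)
        (fun k => if hk : k ∈ K then W (Sum.inr (e ⟨k, hk⟩)) else m₀), ?_, rfl⟩
      rw [Set.mem_setOf_eq, ← key _ W ?_]
      · exact hW
      · rintro ⟨(a | k), hu⟩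
        · rfl
        · have hk : k ∈ K := Finset.mem_preimage.2 hu
          show W (Sum.inr (e ⟨k, _⟩)) = _
          simp only [Sum.elim_inr, dif_pos hk]
  rw [himg]
  exact Set.Definable.image_comp_sumInl_fin _ ⟨ψ, rfl⟩

/-- Images of definable sets under reindexing along an "injection with complement"
are definable (arbitrary index types, `M` nonempty). -/
theorem definable_image_comp_inj [Nonempty M] {A : Set M} {δ ε κ : Type*}
    (j : ε → δ) (eqv : (ε ⊕ κ) ≃ δ) (hj : ∀ a, eqv (Sum.inl a) = j a)
    {s : Set (δ → M)} (h : A.Definable L s) :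
    A.Definable L ((fun g : δ → M => g ∘ j) '' s) := by
  have h1 : A.Definable L ((fun g : δ → M => g ∘ eqv) '' s) := h.image_comp_equiv eqv
  have h2 : ((fun g : δ → M => g ∘ j) '' s) =
      ((fun g : ε ⊕ κ → M => g ∘ Sum.inl) '' ((fun g : δ → M => g ∘ eqv) '' s)) := by
    rw [Set.image_image]
    apply Set.image_congr
    intro g _
    funext a
    simp only [Function.comp_apply, hj]
  rw [h2]
  exact definable_image_comp_sum_inl h1

end Basics



section KMBasics

variable {L : FirstOrder.Language} {M : Type*} [L.Structure M] {A : Set M} {ε : Type*}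

theorem KeislerMeasure.empty' (m : KeislerMeasure L M A ε) : m.toFun ∅ = 0 := by
  have h := m.compl' Set.univ Set.definable_univ
  rw [Set.compl_univ, m.measure_univ] at h
  rw [h]; ring

theorem KeislerMeasure.mono' (m : KeislerMeasure L M A ε) {s t : Set (ε → M)}
    (hs : A.Definable L s) (ht : A.Definable L t) (hst : s ⊆ t) :
    m.toFun s ≤ m.toFun t := by
  have h := m.union_inter' s (t \ s) hs (ht.sdiff hs)
  rw [Set.union_diff_cancel hst, Set.inter_diff_self, m.empty'] at h
  have h2 := m.nonneg' (t \ s) (ht.sdiff hs)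
  linarith

theorem KeislerMeasure.sum_disjoint (m : KeislerMeasure L M A ε) {ι : Type*} [DecidableEq ι]
    (F : Finset ι) (D : ι → Set (ε → M)) (hD : ∀ i, A.Definable L (D i))
    (hdisj : ∀ i ∈ F, ∀ j ∈ F, i ≠ j → D i ∩ D j = ∅) :
    m.toFun (⋃ i ∈ F, D i) = ∑ i ∈ F, m.toFun (D i) := by
  induction F using Finset.induction with
  | empty => simpa using m.empty'
  | @insert a F ha ih =>
    rw [Finset.set_biUnion_insert, Finset.sum_insert ha]
    have hrest : A.Definable L (⋃ i ∈ F, D i) := Set.definable_biUnion_finset (fun i => hD i) F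
    have h := m.union_inter' (D a) (⋃ i ∈ F, D i) (hD a) hrest
    have hint : D a ∩ ⋃ i ∈ F, D i = ∅ := by
      apply Set.eq_empty_iff_forall_notMem.2
      rintro x ⟨hxa, hxF⟩
      rw [Set.mem_iUnion₂] at hxF
      obtain ⟨i, hiF, hxi⟩ := hxF
      have : D a ∩ D i = ∅ := hdisj a (Finset.mem_insert_self a F) i
        (Finset.mem_insert_of_mem hiF) (by rintro rfl; exact ha hiF)
      exact Set.eq_empty_iff_forall_notMem.1 this x ⟨hxa, hxi⟩
    rw [hint, m.empty'] at h
    rw [h, ih (fun i hi => fun j hj => hdisj i (Finset.mem_insert_of_mem hi) j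
      (Finset.mem_insert_of_mem hj))]
    ring

end KMBasics

section DomSum

/-- Finite stochastic domination implies comparison of expectations. -/
theorem dom_sum_aux : ∀ (n : ℕ) (V : Finset ℝ), V.card ≤ n →
    ∀ {X Y : Type*} [Fintype X] [Fintype Y] (u : X → ℝ) (w : Y → ℝ) (μ : X → ℝ) (ν : Y → ℝ),
    (∀ x, u x ∈ V) → (∀ y, w y ∈ V) → (∀ x, 0 ≤ μ x) → (∀ y, 0 ≤ ν y) →
    (∑ x, μ x = ∑ y, ν y) →
    (∀ r : ℝ, ∑ x ∈ Finset.univ.filter (fun x => r < u x), μ x ≤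
      ∑ y ∈ Finset.univ.filter (fun y => r < w y), ν y) →
    ∑ x, u x * μ x ≤ ∑ y, w y * ν y := by
  intro n
  induction n with
  | zero =>
    intro V hV X Y _ _ u w μ ν hu hw hμ hν hsum hdom
    rw [Nat.le_zero, Finset.card_eq_zero] at hV
    subst hV
    cases isEmpty_or_nonempty X with
    | inl hX => cases isEmpty_or_nonempty Y with
      | inl hY => simp
      | inr hY => exact absurd (hw (Classical.arbitrary Y)) (by simp)
    | inr hX => exact absurd (hu (Classical.arbitrary X)) (by simp)
  | succ n ih =>
    intro V hV X Y _ _ u w μ ν hu hw hμ hν hsum hdom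
    classical
    by_cases hVcard : V.card ≤ n
    · exact ih V hVcard u w μ ν hu hw hμ hν hsum hdom
    have hVne : V.Nonempty := by
      rw [← Finset.card_pos]; omega
    set a := V.max' hVne with ha
    have haV : a ∈ V := by rw [ha]; exact V.max'_mem hVne
    have hVea : (V.erase a).card = V.card - 1 := Finset.card_erase_of_mem haV
    by_cases hnotop : (∀ x, u x ≠ a) ∧ (∀ y, w y ≠ a)
    · exact ih (V.erase a) (by omega)
        u w μ ν (fun x => Finset.mem_erase.2 ⟨hnotop.1 x, hu x⟩)
        (fun y => Finset.mem_erase.2 ⟨hnotop.2 y, hw y⟩) hμ hν hsum hdom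
    by_cases hV1 : V.card = 1
    · -- all values equal
      obtain ⟨c, hc⟩ := Finset.card_eq_one.1 hV1
      have hua : ∀ x, u x = c := fun x => Finset.mem_singleton.1 (hc ▸ hu x)
      have hwa : ∀ y, w y = c := fun y => Finset.mem_singleton.1 (hc ▸ hw y)
      have h1 : ∑ x, u x * μ x = c * ∑ x, μ x := by
        rw [Finset.mul_sum]; exact Finset.sum_congr rfl (fun x _ => by rw [hua x])
      have h2 : ∑ y, w y * ν y = c * ∑ y, ν y := by
        rw [Finset.mul_sum]; exact Finset.sum_congr rfl (fun y _ => by rw [hwa y])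
      rw [h1, h2, hsum]
    · -- general step
      have hVero : (V.erase a).Nonempty := by
        rw [← Finset.card_pos]; omega
      set a' := (V.erase a).max' hVero with ha'
      have ha'mem : a' ∈ V.erase a := by rw [ha']; exact Finset.max'_mem _ _
      have ha'V : a' ∈ V := (Finset.mem_erase.1 ha'mem).2
      have ha'lt : a' < a :=
        lt_of_le_of_ne (Finset.le_max' V a' ha'V) (Finset.mem_erase.1 ha'mem).1
      set u' := fun x => if u x = a then a' else u x with hu'def
      set w' := fun y => if w y = a then a' else w y with hw'def
      have hu'mem : ∀ x, u' x ∈ V.erase a := by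
        intro x
        by_cases h : u x = a
        · rw [hu'def]; simp only [if_pos h]; exact ha'mem
        · rw [hu'def]; simp only [if_neg h]; exact Finset.mem_erase.2 ⟨h, hu x⟩
      have hw'mem : ∀ y, w' y ∈ V.erase a := by
        intro y
        by_cases h : w y = a
        · rw [hw'def]; simp only [if_pos h]; exact ha'mem
        · rw [hw'def]; simp only [if_neg h]; exact Finset.mem_erase.2 ⟨h, hw y⟩
      have hub' : ∀ x, u x ≠ a → u x ≤ a' := fun x h =>
        Finset.le_max' _ _ (Finset.mem_erase.2 ⟨h, hu x⟩)
      have hwb' : ∀ y, w y ≠ a → w y ≤ a' := fun y h =>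
        Finset.le_max' _ _ (Finset.mem_erase.2 ⟨h, hw y⟩)
      have hdom' : ∀ r : ℝ, ∑ x ∈ Finset.univ.filter (fun x => r < u' x), μ x ≤
          ∑ y ∈ Finset.univ.filter (fun y => r < w' y), ν y := by
        intro r
        by_cases hr : r < a'
        · have h1 : Finset.univ.filter (fun x => r < u' x) =
              Finset.univ.filter (fun x => r < u x) := by
            apply Finset.filter_congr
            intro x _
            by_cases h : u x = a
            · rw [hu'def]; simp only [if_pos h, h, eq_iff_iff]
              exact iff_of_true hr (lt_trans hr ha'lt)
            · rw [hu'def]; simp only [if_neg h]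
          have h2 : Finset.univ.filter (fun y => r < w' y) =
              Finset.univ.filter (fun y => r < w y) := by
            apply Finset.filter_congr
            intro y _
            by_cases h : w y = a
            · rw [hw'def]; simp only [if_pos h, h, eq_iff_iff]
              exact iff_of_true hr (lt_trans hr ha'lt)
            · rw [hw'def]; simp only [if_neg h]
          rw [h1, h2]; exact hdom r
        · have h1 : Finset.univ.filter (fun x => r < u' x) = ∅ := by
            apply Finset.filter_false_of_mem
            intro x _
            push_neg at hr ⊢
            by_cases h : u x = a
            · rw [hu'def]; simp only [if_pos h]; exact hr
            · rw [hu'def]; simp only [if_neg h]; exact le_trans (hub' x h) hr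
          rw [h1, Finset.sum_empty]
          exact Finset.sum_nonneg (fun y _ => hν y)
      have hih := ih (V.erase a) (by omega) u' w' μ ν hu'mem hw'mem hμ hν hsum hdom'
      have hlev : ∑ x ∈ Finset.univ.filter (fun x => u x = a), μ x ≤
          ∑ y ∈ Finset.univ.filter (fun y => w y = a), ν y := by
        have h1 : Finset.univ.filter (fun x => a' < u x) =
            Finset.univ.filter (fun x => u x = a) := by
          apply Finset.filter_congr
          intro x _
          constructor
          · intro h; by_contra hne; exact absurd (hub' x hne) (not_le.2 h)
          · intro h; rw [h]; exact ha'lt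
        have h2 : Finset.univ.filter (fun y => a' < w y) =
            Finset.univ.filter (fun y => w y = a) := by
          apply Finset.filter_congr
          intro y _
          constructor
          · intro h; by_contra hne; exact absurd (hwb' y hne) (not_le.2 h)
          · intro h; rw [h]; exact ha'lt
        have h3 := hdom a'
        rwa [h1, h2] at h3
      have hudec : ∑ x, u x * μ x = (∑ x, u' x * μ x) +
          (a - a') * ∑ x ∈ Finset.univ.filter (fun x => u x = a), μ x := by
        rw [Finset.mul_sum, Finset.sum_filter, ← Finset.sum_add_distrib]
        apply Finset.sum_congr rfl
        intro x _
        by_cases h : u x = a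
        · rw [if_pos h, hu'def]; simp only [if_pos h]; rw [h]; ring
        · rw [if_neg h, hu'def]; simp only [if_neg h]; ring
      have hwdec : ∑ y, w y * ν y = (∑ y, w' y * ν y) +
          (a - a') * ∑ y ∈ Finset.univ.filter (fun y => w y = a), ν y := by
        rw [Finset.mul_sum, Finset.sum_filter, ← Finset.sum_add_distrib]
        apply Finset.sum_congr rfl
        intro y _
        by_cases h : w y = a
        · rw [if_pos h, hw'def]; simp only [if_pos h]; rw [h]; ring
        · rw [if_neg h, hw'def]; simp only [if_neg h]; ring
      rw [hudec, hwdec]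
      have hmul := mul_le_mul_of_nonneg_left hlev (by linarith : (0:ℝ) ≤ a - a')
      linarith

theorem dom_sum {X Y : Type*} [Fintype X] [Fintype Y] (V : Finset ℝ)
    (u : X → ℝ) (w : Y → ℝ) (μ : X → ℝ) (ν : Y → ℝ)
    (hu : ∀ x, u x ∈ V) (hw : ∀ y, w y ∈ V) (hμ : ∀ x, 0 ≤ μ x) (hν : ∀ y, 0 ≤ ν y)
    (hsum : ∑ x, μ x = ∑ y, ν y)
    (hdom : ∀ r : ℝ, ∑ x ∈ Finset.univ.filter (fun x => r < u x), μ x ≤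
      ∑ y ∈ Finset.univ.filter (fun y => r < w y), ν y) :
    ∑ x, u x * μ x ≤ ∑ y, w y * ν y :=
  dom_sum_aux V.card V le_rfl u w μ ν hu hw hμ hν hsum hdom

end DomSum

section AtomsPkg

variable {L : FirstOrder.Language} {M : Type*} [L.Structure M]

theorem atoms_pkg {A : Set M} {ε : Type*} (m : KeislerMeasure L M A ε)
    {ι : Type*} [Fintype ι] [DecidableEq ι] (E : ι → Set (ε → M))
    [∀ (t : ε → M) (i : ι), Decidable (t ∈ E i)]
    (hE : ∀ i, A.Definable L (E i)) (coef : ι → ℝ) :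
    ∃ (atom : (ι → Bool) → Set (ε → M)) (val : (ι → Bool) → ℝ) (idx : (ε → M) → (ι → Bool)),
      (∀ k, A.Definable L (atom k)) ∧
      (∀ t, t ∈ atom (idx t)) ∧
      (∀ t k, t ∈ atom k → k = idx t) ∧
      (∀ t, val (idx t) = ∑ i, coef i * (if t ∈ E i then 1 else 0)) ∧
      (∑ k, m.toFun (atom k) = 1) ∧
      ((∑ i, coef i * m.toFun (E i)) = ∑ k, val k * m.toFun (atom k)) ∧
      (∀ J : Finset (ι → Bool), A.Definable L (⋃ k ∈ J, atom k) ∧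
        m.toFun (⋃ k ∈ J, atom k) = ∑ k ∈ J, m.toFun (atom k)) := by
  classical
  set atom : (ι → Bool) → Set (ε → M) := fun k => {t | ∀ i, t ∈ E i ↔ k i = true} with hatom
  set val : (ι → Bool) → ℝ := fun k => ∑ i, coef i * (if k i = true then 1 else 0) with hval
  set idx : (ε → M) → (ι → Bool) := fun t i => decide (t ∈ E i) with hidx
  have hdef : ∀ k, A.Definable L (atom k) := by
    intro k
    have hrepr : atom k =
        ⋂ i ∈ (Finset.univ : Finset ι), (if k i = true then E i else (E i)ᶜ) := by
      ext t
      simp only [hatom, Set.mem_setOf_eq, Set.mem_iInter, Finset.mem_univ, forall_const]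
      constructor
      · intro h i
        by_cases hk : k i = true
        · rw [if_pos hk]; exact (h i).2 hk
        · rw [if_neg hk]; intro hmem; exact hk ((h i).1 hmem)
      · intro h i
        by_cases hk : k i = true
        · have h2 := h i; rw [if_pos hk] at h2; exact ⟨fun _ => hk, fun _ => h2⟩
        · have h2 := h i; rw [if_neg hk] at h2
          exact ⟨fun hm => absurd hm h2, fun he => absurd he hk⟩
    rw [hrepr]
    apply Set.definable_biInter_finset
    intro i
    by_cases hk : k i = true
    · rw [if_pos hk]; exact hE i
    · rw [if_neg hk]; exact (hE i).compl
  have hself : ∀ t, t ∈ atom (idx t) := by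
    intro t
    rw [hatom]
    intro i
    rw [hidx]
    simp
  have huniq : ∀ t k, t ∈ atom k → k = idx t := by
    intro t k hk
    funext i
    have h := hk i
    rw [hidx]
    by_cases hmem : t ∈ E i
    · rw [h.1 hmem]; simp [hmem]
    · have h2 : ¬ k i = true := fun hh => hmem (h.2 hh)
      rw [Bool.not_eq_true] at h2
      rw [h2]; simp [hmem]
  have hdisj : ∀ (F : Finset (ι → Bool)), ∀ k ∈ F, ∀ k' ∈ F, k ≠ k' → atom k ∩ atom k' = ∅ := by
    intro F k _ k' _ hne
    apply Set.eq_empty_iff_forall_notMem.2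
    rintro t ⟨h1, h2⟩
    exact hne ((huniq t k h1).trans (huniq t k' h2).symm)
  have hJ : ∀ J : Finset (ι → Bool), A.Definable L (⋃ k ∈ J, atom k) ∧
      m.toFun (⋃ k ∈ J, atom k) = ∑ k ∈ J, m.toFun (atom k) :=
    fun J => ⟨Set.definable_biUnion_finset (fun k => hdef k) J,
      m.sum_disjoint J atom hdef (hdisj J)⟩
  have htotal : ∑ k, m.toFun (atom k) = 1 := by
    have h := (hJ Finset.univ).2
    have huniv : (⋃ k ∈ (Finset.univ : Finset (ι → Bool)), atom k) = Set.univ := by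
      apply Set.eq_univ_iff_forall.2
      intro t
      exact Set.mem_biUnion (Finset.mem_univ _) (hself t)
    rw [huniv, m.measure_univ] at h
    exact h.symm
  have hEdecomp : ∀ i, E i = ⋃ k ∈ Finset.univ.filter (fun k => k i = true), atom k := by
    intro i
    ext t
    constructor
    · intro ht
      have hmemJ : idx t ∈ Finset.univ.filter (fun k => k i = true) := by
        rw [Finset.mem_filter]
        refine ⟨Finset.mem_univ _, ?_⟩
        rw [hidx]
        simp [ht]
      exact Set.mem_biUnion hmemJ (hself t)
    · intro ht
      rw [Set.mem_iUnion₂] at ht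
      obtain ⟨k, hk, htk⟩ := ht
      rw [Finset.mem_filter] at hk
      exact (htk i).2 hk.2
  have hmain : (∑ i, coef i * m.toFun (E i)) = ∑ k, val k * m.toFun (atom k) := by
    have h1 : ∀ i, m.toFun (E i) =
        ∑ k ∈ Finset.univ.filter (fun k => k i = true), m.toFun (atom k) := by
      intro i
      conv_lhs => rw [hEdecomp i]
      exact (hJ _).2
    calc ∑ i, coef i * m.toFun (E i)
        = ∑ i, ∑ k, (if k i = true then coef i * m.toFun (atom k) else 0) := by
          apply Finset.sum_congr rfl
          intro i _
          rw [h1 i, Finset.mul_sum, Finset.sum_filter]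
      _ = ∑ k, ∑ i, (if k i = true then coef i * m.toFun (atom k) else 0) := Finset.sum_comm
      _ = ∑ k, val k * m.toFun (atom k) := by
          apply Finset.sum_congr rfl
          intro k _
          rw [hval]
          show ∑ i, (if k i = true then coef i * m.toFun (atom k) else 0) =
            (∑ i, coef i * (if k i = true then 1 else 0)) * m.toFun (atom k)
          rw [Finset.sum_mul]
          apply Finset.sum_congr rfl
          intro i _
          by_cases h : k i = true
          · rw [if_pos h, if_pos h]; ring
          · rw [if_neg h, if_neg h]; ring
  have hvalidx : ∀ t, val (idx t) = ∑ i, coef i * (if t ∈ E i then 1 else 0) := by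
    intro t
    rw [hval]
    show ∑ i, coef i * (if idx t i = true then 1 else 0) = _
    apply Finset.sum_congr rfl
    intro i _
    rw [hidx]
    by_cases h : t ∈ E i
    · simp [h]
    · simp [h]
  exact ⟨atom, val, idx, hdef, hself, huniq, hvalidx, htotal, hmain, hJ⟩

end AtomsPkg

section Master

variable {L : FirstOrder.Language} {M : Type*} [L.Structure M]

/-- A globally finitely-additive content is a Keisler measure over any parameter set. -/
def contentToKM (A : Set M) {ε : Type*} (ω : Set (ε → M) → ℝ)
    (h1 : ω Set.univ = 1)
    (h0 : ∀ X, 0 ≤ ω X)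
    (hadd : ∀ X Y, ω (X ∪ Y) + ω (X ∩ Y) = ω X + ω Y)
    (hemp : ω ∅ = 0) : KeislerMeasure L M A ε where
  toFun := ω
  measure_univ := h1
  nonneg' := fun s _ => h0 s
  compl' := fun s _ => by
    have h := hadd s sᶜ
    rw [Set.union_compl_self, Set.inter_compl_self, h1, hemp] at h
    linarith
  union_inter' := fun s t _ _ => by
    have h := hadd s t
    linarith

/-- Master extension lemma: a common extension of `m₁` (pulled back along `j₁`) and
`m₂` (pulled back along `j₂`) exists, given the compatibility condition `H`. -/
theorem master [Nonempty M] {δ ε₁ ε₂ : Type*} (j₁ : ε₁ → δ) (j₂ : ε₂ → δ)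
    {A₁ A₂ : Set M} (m₁ : KeislerMeasure L M A₁ ε₁) (m₂ : KeislerMeasure L M A₂ ε₂)
    (H : ∀ S : Set (ε₁ → M), A₁.Definable L S →
      A₂.Definable L ((fun g : δ → M => g ∘ j₂) '' ((fun g : δ → M => g ∘ j₁) ⁻¹' S)) ∧
      m₁.toFun S ≤ m₂.toFun ((fun g : δ → M => g ∘ j₂) '' ((fun g : δ → M => g ∘ j₁) ⁻¹' S))) :
    ∃ ω : Set (δ → M) → ℝ,
      ω Set.univ = 1 ∧ (∀ X, 0 ≤ ω X) ∧
      (∀ X Y, ω (X ∪ Y) + ω (X ∩ Y) = ω X + ω Y) ∧ ω ∅ = 0 ∧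
      (∀ S, A₁.Definable L S → ω (cyl j₁ S) = m₁.toFun S) ∧
      (∀ S, A₂.Definable L S → ω (cyl j₂ S) = m₂.toFun S) := by
  classical
  have hT : Nonempty (δ → M) := ⟨fun _ => Classical.arbitrary M⟩
  let Bdd : Submodule ℝ ((δ → M) → ℝ) :=
    { carrier := {f | ∃ C : ℝ, ∀ t, |f t| ≤ C}
      add_mem' := by
        rintro f g ⟨C, hC⟩ ⟨D, hD⟩
        exact ⟨C + D, fun t => (abs_add_le _ _).trans (add_le_add (hC t) (hD t))⟩
      zero_mem' := ⟨0, fun t => by simp⟩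
      smul_mem' := by
        rintro c f ⟨C, hC⟩
        refine ⟨|c| * C, fun t => ?_⟩
        rw [Pi.smul_apply, smul_eq_mul, abs_mul]
        exact mul_le_mul_of_nonneg_left (hC t) (abs_nonneg c) }
  let ind : Set (δ → M) → ↥Bdd := fun X =>
    ⟨Set.indicator X 1, 1, fun t => by
      by_cases h : t ∈ X
      · rw [Set.indicator_of_mem h]; norm_num
      · rw [Set.indicator_of_notMem h]; norm_num⟩
  have ind_apply : ∀ (X : Set (δ → M)) (t : δ → M),
      ((ind X : ↥Bdd) : (δ → M) → ℝ) t = if t ∈ X then 1 else 0 := by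
    intro X t
    by_cases h : t ∈ X
    · show Set.indicator X 1 t = _
      rw [Set.indicator_of_mem h, if_pos h]; rfl
    · show Set.indicator X 1 t = _
      rw [Set.indicator_of_notMem h, if_neg h]
  let p : ↥Bdd → ℝ := fun f => sSup (Set.range ((f : ↥Bdd) : (δ → M) → ℝ))
  have hbddA : ∀ f : ↥Bdd, BddAbove (Set.range ((f : ↥Bdd) : (δ → M) → ℝ)) := by
    rintro ⟨f, C, hC⟩
    exact ⟨C, by rintro _ ⟨t, rfl⟩; exact (abs_le.1 (hC t)).2⟩
  have p_ub : ∀ (f : ↥Bdd) (t : δ → M), (f : (δ → M) → ℝ) t ≤ p f :=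
    fun f t => le_csSup (hbddA f) ⟨t, rfl⟩
  have p_le : ∀ (f : ↥Bdd) (c : ℝ), (∀ t, (f : (δ → M) → ℝ) t ≤ c) → p f ≤ c :=
    fun f c h => csSup_le (Set.range_nonempty _) (by rintro _ ⟨t, rfl⟩; exact h t)
  have p_hom : ∀ c : ℝ, 0 < c → ∀ f : ↥Bdd, p (c • f) = c * p f := by
    intro c hc f
    apply le_antisymm
    · apply p_le
      intro t
      have h1 : ((c • f : ↥Bdd) : (δ → M) → ℝ) t = c * (f : (δ → M) → ℝ) t := rfl
      rw [h1]
      exact mul_le_mul_of_nonneg_left (p_ub f t) hc.le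
    · rw [mul_comm, ← le_div_iff₀ hc]
      apply p_le
      intro t
      rw [le_div_iff₀ hc]
      have h1 : ((c • f : ↥Bdd) : (δ → M) → ℝ) t = c * (f : (δ → M) → ℝ) t := rfl
      have h2 := p_ub (c • f) t
      rw [h1] at h2
      linarith
  have p_add : ∀ f g : ↥Bdd, p (f + g) ≤ p f + p g := by
    intro f g
    apply p_le
    intro t
    have h1 : ((f + g : ↥Bdd) : (δ → M) → ℝ) t = (f : (δ → M) → ℝ) t + (g : (δ → M) → ℝ) t := rfl
    rw [h1]
    exact add_le_add (p_ub f t) (p_ub g t)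
  -- free module and evaluation maps
  let Q₁ := {S : Set (ε₁ → M) // A₁.Definable L S}
  let Q₂ := {S : Set (ε₂ → M) // A₂.Definable L S}
  let ev₁ : (Q₁ →₀ ℝ) →ₗ[ℝ] ↥Bdd :=
    Finsupp.lsum ℝ (fun S => LinearMap.toSpanSingleton ℝ _ (ind (cyl j₁ S.1)))
  let ev₂ : (Q₂ →₀ ℝ) →ₗ[ℝ] ↥Bdd :=
    Finsupp.lsum ℝ (fun S => LinearMap.toSpanSingleton ℝ _ (ind (cyl j₂ S.1)))
  let ev : ((Q₁ →₀ ℝ) × (Q₂ →₀ ℝ)) →ₗ[ℝ] ↥Bdd := ev₁.coprod ev₂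
  let φ₁ : (Q₁ →₀ ℝ) →ₗ[ℝ] ℝ :=
    Finsupp.lsum ℝ (fun S => LinearMap.toSpanSingleton ℝ ℝ (m₁.toFun S.1))
  let φ₂ : (Q₂ →₀ ℝ) →ₗ[ℝ] ℝ :=
    Finsupp.lsum ℝ (fun S => LinearMap.toSpanSingleton ℝ ℝ (m₂.toFun S.1))
  let φL : ((Q₁ →₀ ℝ) × (Q₂ →₀ ℝ)) →ₗ[ℝ] ℝ := φ₁.coprod φ₂
  let evt : (δ → M) → (↥Bdd →ₗ[ℝ] ℝ) := fun t => (LinearMap.proj t).comp Bdd.subtype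
  have hevt : ∀ (t : δ → M) (f : ↥Bdd), evt t f = (f : (δ → M) → ℝ) t := fun _ _ => rfl
  have ev₁_apply : ∀ (x : Q₁ →₀ ℝ) (t : δ → M),
      ((ev₁ x : ↥Bdd) : (δ → M) → ℝ) t =
        ∑ S ∈ x.support, x S * (if t ∈ cyl j₁ S.1 then 1 else 0) := by
    intro x t
    rw [← hevt]
    have h0 : ev₁ x = x.sum (fun S c => c • ind (cyl j₁ S.1)) := by
      rw [show ev₁ x = Finsupp.lsum ℝ (fun S => LinearMap.toSpanSingleton ℝ _
        (ind (cyl j₁ S.1))) x from rfl, Finsupp.lsum_apply]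
      apply Finsupp.sum_congr
      intro S _
      rw [LinearMap.toSpanSingleton_apply]
    rw [h0, map_finsuppSum, Finsupp.sum]
    apply Finset.sum_congr rfl
    intro S _
    rw [map_smul, hevt, smul_eq_mul, ind_apply]
  have ev₂_apply : ∀ (y : Q₂ →₀ ℝ) (t : δ → M),
      ((ev₂ y : ↥Bdd) : (δ → M) → ℝ) t =
        ∑ R ∈ y.support, y R * (if t ∈ cyl j₂ R.1 then 1 else 0) := by
    intro y t
    rw [← hevt]
    have h0 : ev₂ y = y.sum (fun R c => c • ind (cyl j₂ R.1)) := by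
      rw [show ev₂ y = Finsupp.lsum ℝ (fun R => LinearMap.toSpanSingleton ℝ _
        (ind (cyl j₂ R.1))) y from rfl, Finsupp.lsum_apply]
      apply Finsupp.sum_congr
      intro R _
      rw [LinearMap.toSpanSingleton_apply]
    rw [h0, map_finsuppSum, Finsupp.sum]
    apply Finset.sum_congr rfl
    intro R _
    rw [map_smul, hevt, smul_eq_mul, ind_apply]
  have φ₁_apply : ∀ x : Q₁ →₀ ℝ, φ₁ x = ∑ S ∈ x.support, x S * m₁.toFun S.1 := by
    intro x
    rw [show φ₁ x = Finsupp.lsum ℝ (fun S => LinearMap.toSpanSingleton ℝ ℝ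
      (m₁.toFun S.1)) x from rfl, Finsupp.lsum_apply, Finsupp.sum]
    apply Finset.sum_congr rfl
    intro S _
    rw [LinearMap.toSpanSingleton_apply, smul_eq_mul]
  have φ₂_apply : ∀ y : Q₂ →₀ ℝ, φ₂ y = ∑ R ∈ y.support, y R * m₂.toFun R.1 := by
    intro y
    rw [show φ₂ y = Finsupp.lsum ℝ (fun R => LinearMap.toSpanSingleton ℝ ℝ
      (m₂.toFun R.1)) y from rfl, Finsupp.lsum_apply, Finsupp.sum]
    apply Finset.sum_congr rfl
    intro R _
    rw [LinearMap.toSpanSingleton_apply, smul_eq_mul]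
  -- THE KEY INEQUALITY
  have key : ∀ z : (Q₁ →₀ ℝ) × (Q₂ →₀ ℝ), φL z ≤ p (ev z) := by
    rintro ⟨x, y⟩
    set c := p (ev (x, y)) with hcdef
    obtain ⟨atom₁, val₁, idx₁, hdef₁, hself₁, huniq₁, hvalidx₁, htot₁, hmain₁, hJ₁⟩ :=
      atoms_pkg m₁ (fun S : {S // S ∈ x.support} => S.1.1) (fun S => S.1.2) (fun S => x S.1)
    obtain ⟨atom₂, val₂, idx₂, hdef₂, hself₂, huniq₂, hvalidx₂, htot₂, hmain₂, hJ₂⟩ :=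
      atoms_pkg m₂ (fun R : {R // R ∈ y.support} => R.1.1) (fun R => R.1.2) (fun R => y R.1)
    have hub : ∀ t : δ → M,
        val₁ (idx₁ ((fun g : δ → M => g ∘ j₁) t)) +
        val₂ (idx₂ ((fun g : δ → M => g ∘ j₂) t)) ≤ c := by
      intro t
      have h1 := p_ub (ev (x, y)) t
      have h2 : ((ev (x, y) : ↥Bdd) : (δ → M) → ℝ) t =
          ((ev₁ x : ↥Bdd) : (δ → M) → ℝ) t + ((ev₂ y : ↥Bdd) : (δ → M) → ℝ) t := rfl
      rw [h2, ev₁_apply, ev₂_apply] at h1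
      have e1 : val₁ (idx₁ ((fun g : δ → M => g ∘ j₁) t)) =
          ∑ S ∈ x.support, x S * (if t ∈ cyl j₁ S.1 then 1 else 0) := by
        rw [hvalidx₁]
        exact Finset.sum_coe_sort x.support
          (fun S => x S * (if t ∈ cyl j₁ S.1 then 1 else 0))
      have e2 : val₂ (idx₂ ((fun g : δ → M => g ∘ j₂) t)) =
          ∑ R ∈ y.support, y R * (if t ∈ cyl j₂ R.1 then 1 else 0) := by
        rw [hvalidx₂]
        exact Finset.sum_coe_sort y.support
          (fun R => y R * (if t ∈ cyl j₂ R.1 then 1 else 0))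
      rw [e1, e2]
      exact h1
    have hφ : φL (x, y) = (∑ k, val₁ k * m₁.toFun (atom₁ k)) +
        (∑ k, val₂ k * m₂.toFun (atom₂ k)) := by
      have h1 : φL (x, y) = φ₁ x + φ₂ y := rfl
      rw [h1, φ₁_apply, φ₂_apply, ← hmain₁, ← hmain₂]
      congr 1
      · exact (Finset.sum_coe_sort x.support (fun S => x S * m₁.toFun S.1)).symm
      · exact (Finset.sum_coe_sort y.support (fun R => y R * m₂.toFun R.1)).symm
    have hdom : ∀ r : ℝ,
        ∑ k ∈ Finset.univ.filter (fun k => r < val₁ k), m₁.toFun (atom₁ k) ≤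
        ∑ k ∈ Finset.univ.filter (fun k => r < c - val₂ k), m₂.toFun (atom₂ k) := by
      intro r
      obtain ⟨hUdef, hUsum⟩ := hJ₁ (Finset.univ.filter (fun k => r < val₁ k))
      obtain ⟨hWdef, hWsum⟩ := hJ₂ (Finset.univ.filter (fun k => r < c - val₂ k))
      rw [← hUsum, ← hWsum]
      obtain ⟨hImgdef, hImgle⟩ := H _ hUdef
      refine le_trans hImgle (m₂.mono' hImgdef hWdef ?_)
      rintro yy ⟨t, ht, rfl⟩
      rw [Set.mem_preimage, Set.mem_iUnion₂] at ht
      obtain ⟨k, hkJ, htk⟩ := ht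
      have hvk : val₁ k = val₁ (idx₁ ((fun g : δ → M => g ∘ j₁) t)) :=
        congrArg val₁ (huniq₁ _ _ htk)
      have hkr : r < val₁ k := (Finset.mem_filter.1 hkJ).2
      have hub2 := hub t
      refine Set.mem_biUnion (Finset.mem_filter.2 ⟨Finset.mem_univ _, ?_⟩)
        (hself₂ ((fun g : δ → M => g ∘ j₂) t))
      linarith
    have hds := dom_sum ((Finset.univ.image val₁) ∪ (Finset.univ.image (fun k => c - val₂ k)))
      val₁ (fun k => c - val₂ k)
      (fun k => m₁.toFun (atom₁ k)) (fun k => m₂.toFun (atom₂ k))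
      (fun k => Finset.mem_union_left _ (Finset.mem_image_of_mem _ (Finset.mem_univ k)))
      (fun k => Finset.mem_union_right _ (Finset.mem_image_of_mem _ (Finset.mem_univ k)))
      (fun k => m₁.nonneg' _ (hdef₁ k)) (fun k => m₂.nonneg' _ (hdef₂ k))
      (by rw [htot₁, htot₂]) hdom
    have hsum2 : ∑ k, (c - val₂ k) * m₂.toFun (atom₂ k) =
        c - ∑ k, val₂ k * m₂.toFun (atom₂ k) := by
      have : ∀ k, (c - val₂ k) * m₂.toFun (atom₂ k) =
          c * m₂.toFun (atom₂ k) - val₂ k * m₂.toFun (atom₂ k) := fun k => by ring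
      rw [Finset.sum_congr rfl (fun k _ => this k), Finset.sum_sub_distrib,
        ← Finset.mul_sum, htot₂, mul_one]
    rw [hφ]
    rw [hsum2] at hds
    linarith
  -- kernel inclusion and the partial linear functional
  have hp0 : p 0 = 0 := by
    have h1 : Set.range (((0 : ↥Bdd) : ↥Bdd) : (δ → M) → ℝ) = {(0 : ℝ)} := by
      rw [show (((0 : ↥Bdd) : ↥Bdd) : (δ → M) → ℝ) = (fun _ => (0:ℝ)) from rfl]
      exact Set.range_const
    show sSup (Set.range (((0 : ↥Bdd) : ↥Bdd) : (δ → M) → ℝ)) = 0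
    rw [h1, csSup_singleton]
  have hker : LinearMap.ker ev ≤ LinearMap.ker φL := by
    intro z hz
    rw [LinearMap.mem_ker] at hz ⊢
    have h1 := key z
    have h2 := key (-z)
    rw [hz, hp0] at h1
    rw [map_neg, map_neg, hz, neg_zero, hp0] at h2
    linarith
  let ψ : ↥(LinearMap.range ev) →ₗ[ℝ] ℝ :=
    (Submodule.liftQ (LinearMap.ker ev) φL hker).comp
      (LinearMap.quotKerEquivRange ev).symm.toLinearMap
  have ψ_spec : ∀ z, ψ ⟨ev z, LinearMap.mem_range_self ev z⟩ = φL z := by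
    intro z
    have h1 : (LinearMap.quotKerEquivRange ev) (Submodule.Quotient.mk z) =
        ⟨ev z, LinearMap.mem_range_self ev z⟩ := by
      apply Subtype.ext
      simp [LinearMap.quotKerEquivRange]
    have h2 : (LinearMap.quotKerEquivRange ev).symm ⟨ev z, LinearMap.mem_range_self ev z⟩ =
        Submodule.Quotient.mk z := by
      rw [← h1, LinearEquiv.symm_apply_apply]
    show (Submodule.liftQ (LinearMap.ker ev) φL hker)
      ((LinearMap.quotKerEquivRange ev).symm.toLinearMap ⟨ev z, LinearMap.mem_range_self ev z⟩)
      = φL z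
    rw [show (LinearMap.quotKerEquivRange ev).symm.toLinearMap
        ⟨ev z, LinearMap.mem_range_self ev z⟩ = Submodule.Quotient.mk z from h2,
      Submodule.liftQ_apply]
  let fpm : ↥Bdd →ₗ.[ℝ] ℝ := ⟨LinearMap.range ev, ψ⟩
  have hfpm : ∀ xx : ↥(fpm.domain), fpm xx ≤ p xx := by
    rintro ⟨xv, hx⟩
    obtain ⟨z, rfl⟩ := LinearMap.mem_range.1 hx
    have h1 : fpm ⟨ev z, hx⟩ = ψ ⟨ev z, hx⟩ := rfl
    rw [h1]
    exact le_trans (le_of_eq (ψ_spec z)) (key z)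
  obtain ⟨g, hg_eq, hg_le⟩ := exists_extension_of_le_sublinear fpm p p_hom p_add hfpm
  have hg_ev : ∀ z, g (ev z) = φL z := by
    intro z
    have h := hg_eq ⟨ev z, LinearMap.mem_range_self ev z⟩
    rw [show ((⟨ev z, LinearMap.mem_range_self ev z⟩ : ↥fpm.domain) : ↥Bdd) = ev z from rfl] at h
    rw [h]
    exact ψ_spec z
  have hval₁ : ∀ (S : Set (ε₁ → M)), A₁.Definable L S → g (ind (cyl j₁ S)) = m₁.toFun S := by
    intro S hS
    have hz : ev (Finsupp.single (⟨S, hS⟩ : Q₁) 1, 0) = ind (cyl j₁ S) := by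
      show ev₁ (Finsupp.single ⟨S, hS⟩ 1) + ev₂ 0 = ind (cyl j₁ S)
      rw [map_zero, add_zero]
      rw [show ev₁ (Finsupp.single (⟨S, hS⟩ : Q₁) 1) = Finsupp.lsum ℝ
        (fun S : Q₁ => LinearMap.toSpanSingleton ℝ _ (ind (cyl j₁ S.1)))
        (Finsupp.single ⟨S, hS⟩ 1) from rfl]
      rw [Finsupp.lsum_single, LinearMap.toSpanSingleton_apply, one_smul]
    rw [← hz, hg_ev]
    show φ₁ (Finsupp.single ⟨S, hS⟩ 1) + φ₂ 0 = m₁.toFun S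
    rw [map_zero, add_zero]
    rw [show φ₁ (Finsupp.single (⟨S, hS⟩ : Q₁) 1) = Finsupp.lsum ℝ
      (fun S : Q₁ => LinearMap.toSpanSingleton ℝ ℝ (m₁.toFun S.1))
      (Finsupp.single ⟨S, hS⟩ 1) from rfl]
    rw [Finsupp.lsum_single, LinearMap.toSpanSingleton_apply, one_smul]
  have hval₂ : ∀ (S : Set (ε₂ → M)), A₂.Definable L S → g (ind (cyl j₂ S)) = m₂.toFun S := by
    intro S hS
    have hz : ev (0, Finsupp.single (⟨S, hS⟩ : Q₂) 1) = ind (cyl j₂ S) := by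
      show ev₁ 0 + ev₂ (Finsupp.single ⟨S, hS⟩ 1) = ind (cyl j₂ S)
      rw [map_zero, zero_add]
      rw [show ev₂ (Finsupp.single (⟨S, hS⟩ : Q₂) 1) = Finsupp.lsum ℝ
        (fun S : Q₂ => LinearMap.toSpanSingleton ℝ _ (ind (cyl j₂ S.1)))
        (Finsupp.single ⟨S, hS⟩ 1) from rfl]
      rw [Finsupp.lsum_single, LinearMap.toSpanSingleton_apply, one_smul]
    rw [← hz, hg_ev]
    show φ₁ 0 + φ₂ (Finsupp.single ⟨S, hS⟩ 1) = m₂.toFun S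
    rw [map_zero, zero_add]
    rw [show φ₂ (Finsupp.single (⟨S, hS⟩ : Q₂) 1) = Finsupp.lsum ℝ
      (fun S : Q₂ => LinearMap.toSpanSingleton ℝ ℝ (m₂.toFun S.1))
      (Finsupp.single ⟨S, hS⟩ 1) from rfl]
    rw [Finsupp.lsum_single, LinearMap.toSpanSingleton_apply, one_smul]
  refine ⟨fun X => g (ind X), ?_, ?_, ?_, ?_, hval₁, hval₂⟩
  · -- total mass
    have h := hval₁ Set.univ Set.definable_univ
    rw [m₁.measure_univ] at h
    rw [show cyl j₁ (Set.univ : Set (ε₁ → M)) = (Set.univ : Set (δ → M)) from rfl] at h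
    exact h
  · -- nonneg
    intro X
    have h1 := hg_le (-(ind X))
    rw [map_neg] at h1
    have h2 : p (-(ind X)) ≤ 0 := by
      apply p_le
      intro t
      have h3 : ((-(ind X) : ↥Bdd) : (δ → M) → ℝ) t = -(((ind X : ↥Bdd) : (δ → M) → ℝ) t) := rfl
      rw [h3, ind_apply]
      by_cases h : t ∈ X
      · rw [if_pos h]; norm_num
      · rw [if_neg h]; norm_num
    linarith
  · -- modularity
    intro X Y
    have hind : ind (X ∪ Y) + ind (X ∩ Y) = ind X + ind Y := by
      apply Subtype.ext
      funext t
      have h1 : ((ind (X ∪ Y) + ind (X ∩ Y) : ↥Bdd) : (δ → M) → ℝ) t =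
          ((ind (X ∪ Y) : ↥Bdd) : (δ → M) → ℝ) t + ((ind (X ∩ Y) : ↥Bdd) : (δ → M) → ℝ) t := rfl
      have h2 : ((ind X + ind Y : ↥Bdd) : (δ → M) → ℝ) t =
          ((ind X : ↥Bdd) : (δ → M) → ℝ) t + ((ind Y : ↥Bdd) : (δ → M) → ℝ) t := rfl
      show ((ind (X ∪ Y) + ind (X ∩ Y) : ↥Bdd) : (δ → M) → ℝ) t =
        ((ind X + ind Y : ↥Bdd) : (δ → M) → ℝ) t
      rw [h1, h2, ind_apply, ind_apply, ind_apply, ind_apply]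
      by_cases hX : t ∈ X <;> by_cases hY : t ∈ Y <;>
        simp [hX, hY, Set.mem_union, Set.mem_inter_iff]
    have := congrArg g hind
    rw [map_add, map_add] at this
    exact this
  · -- empty
    show g (ind ∅) = 0
    have h1 : ind ∅ = 0 := by
      apply Subtype.ext
      show Set.indicator ∅ 1 = _
      rw [Set.indicator_empty]
      rfl
    rw [h1, map_zero]

end Master

section Degenerate

variable {L : FirstOrder.Language} {M : Type*} [L.Structure M]

theorem km_absurd (hM : IsEmpty M) {A : Set M} {ε : Type*}
    (hε : Nonempty ε) (m : KeislerMeasure L M A ε) : False := by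
  have huniv : (Set.univ : Set (ε → M)) = ∅ := by
    rw [Set.univ_eq_empty_iff]
    exact ⟨fun f => hM.false (f hε.some)⟩
  have h := m.empty'
  rw [← huniv, m.measure_univ] at h
  norm_num at h

theorem km_unique_eval {A : Set M} {ε : Type*} [IsEmpty ε] (e : ε → M)
    (m : KeislerMeasure L M A ε) {S : Set (ε → M)} (hS : A.Definable L S)
    [Decidable (e ∈ S)] :
    m.toFun S = if e ∈ S then 1 else 0 := by
  haveI : Subsingleton (ε → M) := ⟨fun f g => funext fun x => isEmptyElim x⟩
  by_cases h : e ∈ S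
  · rw [if_pos h]
    have hSu : S = Set.univ := Set.eq_univ_of_forall (fun y => (Subsingleton.elim e y) ▸ h)
    rw [hSu, m.measure_univ]
  · rw [if_neg h]
    have hSe : S = ∅ := Set.eq_empty_iff_forall_notMem.2
      (fun y hy => h ((Subsingleton.elim y e) ▸ hy))
    rw [hSe, m.empty']

/-- Pull back a global content along a variable injection, as a Keisler measure. -/
def pullKM (A : Set M) {δ ε : Type*} (j : ε → δ) (ω : Set (δ → M) → ℝ)
    (h1 : ω Set.univ = 1) (h0 : ∀ X, 0 ≤ ω X)
    (hadd : ∀ X Y, ω (X ∪ Y) + ω (X ∩ Y) = ω X + ω Y) (hemp : ω ∅ = 0) :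
    KeislerMeasure L M A ε :=
  contentToKM A (fun W => ω (cyl j W))
    (by show ω (cyl j Set.univ) = 1
        rw [show cyl j (Set.univ : Set (ε → M)) = Set.univ from rfl]; exact h1)
    (fun X => h0 _)
    (fun X Y => by
      show ω (cyl j (X ∪ Y)) + ω (cyl j (X ∩ Y)) = ω (cyl j X) + ω (cyl j Y)
      rw [show cyl j (X ∪ Y) = cyl j X ∪ cyl j Y from rfl,
        show cyl j (X ∩ Y) = cyl j X ∩ cyl j Y from rfl]
      exact hadd _ _)
    (by show ω (cyl j ∅) = 0
        rw [show cyl j (∅ : Set (ε → M)) = ∅ from rfl]; exact hemp)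

end Degenerate

/-- Transitivity of extension domination over a fixed parameter set:
if `μ ≥_{E,A} ν` and `ν ≥_{E,A} η`, then `μ ≥_{E,A} η`. -/
theorem extDom_trans {L : FirstOrder.Language} {M : Type*} [L.Structure M]
    (A : Set M) {α β γ : Type*}
    (mu : KeislerMeasure L M (Set.univ : Set M) α)
    (nu : KeislerMeasure L M (Set.univ : Set M) β)
    (eta : KeislerMeasure L M (Set.univ : Set M) γ)
    (h₁ : ExtDomOver L A mu nu) (h₂ : ExtDomOver L A nu eta) :
    ExtDomOver L A mu eta := by
  classical
  obtain ⟨lam₁, hm₁, hE₁⟩ := h₁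
  obtain ⟨lam₂, hm₂, hE₂⟩ := h₂
  by_cases hM : Nonempty M
  · -- ===================== main case: M nonempty =====================
    haveI := hM
    -- Step I: the β-marginal of lam₁ is ν on A-definable sets
    have stepI : ∀ Q : Set (β → M), A.Definable L Q →
        lam₁.toFun (cyl Sum.inr Q) = nu.toFun Q := by
      intro Q hQ
      have HI : ∀ S : Set ((α ⊕ β) → M), A.Definable L S →
          (Set.univ : Set M).Definable L ((fun g : (α ⊕ β) → M => g ∘ Sum.inl) ''
            ((fun g : (α ⊕ β) → M => g ∘ (id : (α ⊕ β) → (α ⊕ β))) ⁻¹' S)) ∧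
          lam₁.toFun S ≤ mu.toFun ((fun g : (α ⊕ β) → M => g ∘ Sum.inl) ''
            ((fun g : (α ⊕ β) → M => g ∘ (id : (α ⊕ β) → (α ⊕ β))) ⁻¹' S)) := by
        intro S hS
        have hpre : ((fun g : (α ⊕ β) → M => g ∘ (id : (α ⊕ β) → (α ⊕ β))) ⁻¹' S) = S := rfl
        rw [hpre]
        have himg : A.Definable L ((fun g : (α ⊕ β) → M => g ∘ Sum.inl) '' S) :=
          definable_image_comp_inj Sum.inl (Equiv.refl (α ⊕ β)) (fun a => rfl) hS
        refine ⟨himg.mono (Set.subset_univ A), ?_⟩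
        have hsub : S ⊆ cyl Sum.inl ((fun g : (α ⊕ β) → M => g ∘ Sum.inl) '' S) :=
          fun t ht => ⟨t, ht, rfl⟩
        calc lam₁.toFun S
            ≤ lam₁.toFun (cyl Sum.inl ((fun g : (α ⊕ β) → M => g ∘ Sum.inl) '' S)) :=
              lam₁.mono' hS (definable_cyl _ himg) hsub
          _ = mu.toFun ((fun g : (α ⊕ β) → M => g ∘ Sum.inl) '' S) := hm₁ _ himg
      obtain ⟨ω, hω1, hω0, hωa, hωe, hωm₁, hωm₂⟩ :=
        master (id : (α ⊕ β) → (α ⊕ β)) (Sum.inl : α → α ⊕ β) lam₁ mu HI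
      let om₁ : KeislerMeasure L M (Set.univ : Set M) (α ⊕ β) :=
        contentToKM (Set.univ : Set M) ω hω1 hω0 hωa hωe
      have hmem : om₁ ∈ extSpace L A lam₁ mu := by
        refine ⟨?_, ?_⟩
        · intro s hs
          have h := hωm₁ s hs
          rwa [show cyl (id : (α ⊕ β) → (α ⊕ β)) s = s from rfl] at h
        · intro X hX
          exact hωm₂ X hX
      have h := hE₁ om₁ hmem Q (hQ.mono (Set.subset_univ A))
      have h2 := hωm₁ (cyl Sum.inr Q) (definable_cyl _ hQ)
      rw [show cyl (id : (α ⊕ β) → (α ⊕ β)) (cyl Sum.inr Q) = cyl Sum.inr Q from rfl] at h2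
      rw [← h2]
      exact h
    -- the three coordinate injections into (α ⊕ β) ⊕ γ
    set jab : (α ⊕ β) → ((α ⊕ β) ⊕ γ) := Sum.inl with hjab
    set jbc : (β ⊕ γ) → ((α ⊕ β) ⊕ γ) :=
      Sum.elim (fun b => Sum.inl (Sum.inr b)) Sum.inr with hjbc
    set jac : (α ⊕ γ) → ((α ⊕ β) ⊕ γ) :=
      Sum.elim (fun a => Sum.inl (Sum.inl a)) Sum.inr with hjac
    let eBC : ((β ⊕ γ) ⊕ α) ≃ ((α ⊕ β) ⊕ γ) :=
      { toFun := Sum.elim (Sum.elim (fun b => Sum.inl (Sum.inr b)) Sum.inr)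
          (fun a => Sum.inl (Sum.inl a))
        invFun := Sum.elim (Sum.elim (fun a => Sum.inr a) (fun b => Sum.inl (Sum.inl b)))
          (fun c => Sum.inl (Sum.inr c))
        left_inv := by rintro ((b | c) | a) <;> rfl
        right_inv := by rintro ((a | b) | c) <;> rfl }
    let eAC : ((α ⊕ γ) ⊕ β) ≃ ((α ⊕ β) ⊕ γ) :=
      { toFun := Sum.elim (Sum.elim (fun a => Sum.inl (Sum.inl a)) Sum.inr)
          (fun b => Sum.inl (Sum.inr b))
        invFun := Sum.elim (Sum.elim (fun a => Sum.inl (Sum.inl a)) (fun b => Sum.inr b))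
          (fun c => Sum.inl (Sum.inr c))
        left_inv := by rintro ((a | c) | b) <;> rfl
        right_inv := by rintro ((a | b) | c) <;> rfl }
    -- Step II: amalgamate lam₁ and lam₂ over β into Ω₀ on (α ⊕ β) ⊕ γ
    have HII : ∀ S : Set ((α ⊕ β) → M), A.Definable L S →
        A.Definable L ((fun g : ((α ⊕ β) ⊕ γ) → M => g ∘ jbc) ''
          ((fun g : ((α ⊕ β) ⊕ γ) → M => g ∘ jab) ⁻¹' S)) ∧
        lam₁.toFun S ≤ lam₂.toFun ((fun g : ((α ⊕ β) ⊕ γ) → M => g ∘ jbc) ''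
          ((fun g : ((α ⊕ β) ⊕ γ) → M => g ∘ jab) ⁻¹' S)) := by
      intro S hS
      have hpredef : A.Definable L ((fun g : ((α ⊕ β) ⊕ γ) → M => g ∘ jab) ⁻¹' S) :=
        hS.preimage_comp jab
      have himgdef : A.Definable L ((fun g : ((α ⊕ β) ⊕ γ) → M => g ∘ jbc) ''
          ((fun g : ((α ⊕ β) ⊕ γ) → M => g ∘ jab) ⁻¹' S)) :=
        definable_image_comp_inj jbc eBC (by rintro (b | c) <;> rfl) hpredef
      refine ⟨himgdef, ?_⟩
      have hQdef : A.Definable L ((fun g : (α ⊕ β) → M => g ∘ Sum.inr) '' S) :=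
        definable_image_comp_inj Sum.inr (Equiv.sumComm β α) (fun b => rfl) hS
      have hsub1 : S ⊆ cyl Sum.inr ((fun g : (α ⊕ β) → M => g ∘ Sum.inr) '' S) :=
        fun t ht => ⟨t, ht, rfl⟩
      have hsub2 : cyl Sum.inl ((fun g : (α ⊕ β) → M => g ∘ Sum.inr) '' S) ⊆
          (fun g : ((α ⊕ β) ⊕ γ) → M => g ∘ jbc) ''
            ((fun g : ((α ⊕ β) ⊕ γ) → M => g ∘ jab) ⁻¹' S) := by
        rintro h hh
        obtain ⟨g0, hg0, hgeq⟩ := hh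
        refine ⟨Sum.elim g0 (fun c => h (Sum.inr c)), ?_, ?_⟩
        · show (Sum.elim g0 (fun c => h (Sum.inr c))) ∘ jab ∈ S
          have heq : (Sum.elim g0 (fun c => h (Sum.inr c))) ∘ jab = g0 := by
            funext w; rfl
          rwa [heq]
        · show (Sum.elim g0 (fun c => h (Sum.inr c))) ∘ jbc = h
          funext w
          cases w with
          | inl b => exact congrFun hgeq b
          | inr c => rfl
      calc lam₁.toFun S
          ≤ lam₁.toFun (cyl Sum.inr ((fun g : (α ⊕ β) → M => g ∘ Sum.inr) '' S)) :=
            lam₁.mono' hS (definable_cyl _ hQdef) hsub1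
        _ = nu.toFun ((fun g : (α ⊕ β) → M => g ∘ Sum.inr) '' S) := stepI _ hQdef
        _ = lam₂.toFun (cyl Sum.inl ((fun g : (α ⊕ β) → M => g ∘ Sum.inr) '' S)) :=
            (hm₂ _ hQdef).symm
        _ ≤ lam₂.toFun _ := lam₂.mono' (definable_cyl _ hQdef) himgdef hsub2
    obtain ⟨Ω₀, hΩ₀1, hΩ₀0, hΩ₀a, hΩ₀e, hP1, hP2⟩ := master jab jbc lam₁ lam₂ HII
    -- lam₃ := the (α, γ)-marginal of Ω₀
    let lam3 : KeislerMeasure L M A (α ⊕ γ) := pullKM A jac Ω₀ hΩ₀1 hΩ₀0 hΩ₀a hΩ₀e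
    have hm₃ : ∀ X : Set (α → M), A.Definable L X →
        lam3.toFun (cyl Sum.inl X) = mu.toFun X := by
      intro X hX
      show Ω₀ (cyl jac (cyl Sum.inl X)) = mu.toFun X
      rw [show cyl jac (cyl Sum.inl X) = cyl jab (cyl Sum.inl X) from rfl]
      rw [hP1 (cyl Sum.inl X) (definable_cyl _ hX)]
      exact hm₁ X hX
    refine ⟨lam3, hm₃, ?_⟩
    intro om hom Y hY
    -- Step III: extend om to the triple space compatibly with Ω₀
    let KO : KeislerMeasure L M A ((α ⊕ β) ⊕ γ) := contentToKM A Ω₀ hΩ₀1 hΩ₀0 hΩ₀a hΩ₀e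
    have HIII : ∀ S : Set (((α ⊕ β) ⊕ γ) → M), A.Definable L S →
        (Set.univ : Set M).Definable L ((fun g : ((α ⊕ β) ⊕ γ) → M => g ∘ jac) ''
          ((fun g : ((α ⊕ β) ⊕ γ) → M =>
            g ∘ (id : ((α ⊕ β) ⊕ γ) → ((α ⊕ β) ⊕ γ))) ⁻¹' S)) ∧
        KO.toFun S ≤ om.toFun ((fun g : ((α ⊕ β) ⊕ γ) → M => g ∘ jac) ''
          ((fun g : ((α ⊕ β) ⊕ γ) → M =>
            g ∘ (id : ((α ⊕ β) ⊕ γ) → ((α ⊕ β) ⊕ γ))) ⁻¹' S)) := by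
      intro S hS
      have hpre : ((fun g : ((α ⊕ β) ⊕ γ) → M =>
          g ∘ (id : ((α ⊕ β) ⊕ γ) → ((α ⊕ β) ⊕ γ))) ⁻¹' S) = S := rfl
      rw [hpre]
      have himgdef : A.Definable L ((fun g : ((α ⊕ β) ⊕ γ) → M => g ∘ jac) '' S) :=
        definable_image_comp_inj jac eAC (by rintro (a | c) <;> rfl) hS
      refine ⟨himgdef.mono (Set.subset_univ A), ?_⟩
      have hsub : S ⊆ cyl jac ((fun g : ((α ⊕ β) ⊕ γ) → M => g ∘ jac) '' S) :=
        fun t ht => ⟨t, ht, rfl⟩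
      calc KO.toFun S
          ≤ KO.toFun (cyl jac ((fun g : ((α ⊕ β) ⊕ γ) → M => g ∘ jac) '' S)) :=
            KO.mono' hS (definable_cyl _ himgdef) hsub
        _ = lam3.toFun ((fun g : ((α ⊕ β) ⊕ γ) → M => g ∘ jac) '' S) := rfl
        _ = om.toFun ((fun g : ((α ⊕ β) ⊕ γ) → M => g ∘ jac) '' S) :=
            (hom.1 _ himgdef).symm
    obtain ⟨Ω, hΩ1, hΩ0, hΩa, hΩe, hG1, hG2⟩ :=
      master (id : ((α ⊕ β) ⊕ γ) → ((α ⊕ β) ⊕ γ)) jac KO om HIII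
    -- the (α, β)-marginal of Ω lies in E(lam₁, mu)
    let om' : KeislerMeasure L M (Set.univ : Set M) (α ⊕ β) :=
      pullKM (Set.univ : Set M) jab Ω hΩ1 hΩ0 hΩa hΩe
    have hom' : om' ∈ extSpace L A lam₁ mu := by
      refine ⟨?_, ?_⟩
      · intro s hs
        show Ω (cyl jab s) = lam₁.toFun s
        have h1 := hG1 (cyl jab s) (definable_cyl _ hs)
        rw [show cyl (id : ((α ⊕ β) ⊕ γ) → ((α ⊕ β) ⊕ γ)) (cyl jab s) = cyl jab s from rfl] at h1
        rw [h1]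
        exact hP1 s hs
      · intro X hX
        show Ω (cyl jab (cyl Sum.inl X)) = mu.toFun X
        rw [show cyl jab (cyl Sum.inl X) = cyl jac (cyl Sum.inl X) from rfl]
        rw [hG2 (cyl Sum.inl X) (definable_cyl _ hX)]
        exact hom.2 X hX
    have hnu' := hE₁ om' hom'
    -- the (β, γ)-marginal of Ω lies in E(lam₂, nu)
    let om'' : KeislerMeasure L M (Set.univ : Set M) (β ⊕ γ) :=
      pullKM (Set.univ : Set M) jbc Ω hΩ1 hΩ0 hΩa hΩe
    have hom'' : om'' ∈ extSpace L A lam₂ nu := by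
      refine ⟨?_, ?_⟩
      · intro s hs
        show Ω (cyl jbc s) = lam₂.toFun s
        have h1 := hG1 (cyl jbc s) (definable_cyl _ hs)
        rw [show cyl (id : ((α ⊕ β) ⊕ γ) → ((α ⊕ β) ⊕ γ)) (cyl jbc s) = cyl jbc s from rfl] at h1
        rw [h1]
        exact hP2 s hs
      · intro Q hQ
        show Ω (cyl jbc (cyl Sum.inl Q)) = nu.toFun Q
        rw [show cyl jbc (cyl Sum.inl Q) = cyl jab (cyl Sum.inr Q) from rfl]
        exact hnu' Q hQ
    have hfin := hE₂ om'' hom'' Y hY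
    show om.toFun (cyl Sum.inr Y) = eta.toFun Y
    rw [← hfin]
    have h2 := hG2 (cyl Sum.inr Y) (definable_cyl _ hY)
    show om.toFun (cyl Sum.inr Y) = Ω (cyl jbc (cyl Sum.inr Y))
    rw [show cyl jbc (cyl Sum.inr Y) = cyl jac (cyl Sum.inr Y) from rfl]
    exact h2.symm
  · -- ===================== degenerate case: M empty =====================
    rw [not_nonempty_iff] at hM
    by_cases hα : Nonempty α
    · exact (km_absurd hM hα mu).elim
    by_cases hβ : Nonempty β
    · exact (km_absurd hM hβ nu).elim
    by_cases hγ : Nonempty γ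
    · exact (km_absurd hM hγ eta).elim
    rw [not_nonempty_iff] at hα hβ hγ
    haveI := hα; haveI := hβ; haveI := hγ
    haveI : IsEmpty (α ⊕ γ) := inferInstance
    let e0 : (α ⊕ γ) → M := fun x => isEmptyElim x
    refine ⟨contentToKM A (fun s => if e0 ∈ s then 1 else 0)
      (by simp)
      (fun X => by by_cases h : e0 ∈ X <;> simp [h])
      (fun X Y => by
        by_cases hX : e0 ∈ X <;> by_cases hY : e0 ∈ Y <;>
          simp [hX, hY, Set.mem_union, Set.mem_inter_iff])
      (by simp), ?_, ?_⟩
    · intro X hX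
      show (if e0 ∈ cyl Sum.inl X then (1:ℝ) else 0) = mu.toFun X
      rw [km_unique_eval (fun x : α => isEmptyElim x) mu (hX.mono (Set.subset_univ A))]
      have hmm : e0 ∈ cyl Sum.inl X ↔ (fun x : α => isEmptyElim x) ∈ X := by
        show ((fun a : α => e0 (Sum.inl a)) ∈ X) ↔ _
        rw [show (fun a : α => e0 (Sum.inl a)) = (fun x : α => isEmptyElim x) from
          funext fun a => isEmptyElim a]
      by_cases h : (fun x : α => isEmptyElim x) ∈ X
      · rw [if_pos (hmm.2 h), if_pos h]
      · rw [if_neg (fun hh => h (hmm.1 hh)), if_neg h]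
    · intro om hom Y hY
      rw [km_unique_eval e0 om (definable_cyl Sum.inr hY),
        km_unique_eval (fun x : γ => isEmptyElim x) eta hY]
      have hmm : e0 ∈ cyl Sum.inr Y ↔ (fun x : γ => isEmptyElim x) ∈ Y := by
        show ((fun c : γ => e0 (Sum.inr c)) ∈ Y) ↔ _
        rw [show (fun c : γ => e0 (Sum.inr c)) = (fun x : γ => isEmptyElim x) from
          funext fun c => isEmptyElim c]
      by_cases h : (fun x : γ => isEmptyElim x) ∈ Y
      · rw [if_pos (hmm.2 h), if_pos h]
      · rw [if_neg (fun hh => h (hmm.1 hh)), if_neg h]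
end

section
/- Suppose μ ∈ 𝔐_x(M) extension dominates ν ∈ 𝔐_y(M) over A and λ ∈ 𝔐_xy(A) witnesses the domination. Then for every ω ∈ E(λ,μ), every D ∈ L_y(M), and every ε > 0, there exist sets G⁻, G⁺ ∈ 𝔹_xy(A) such that: (1) G⁻ ⊆ M^x × D ⊆ G⁺; (2) ω(G⁺) − ω(G⁻) < ε; and (3) |ω(G⁻) − ν(D)| < ε and |ω(G⁺) − ν(D)| < ε. -/
open FirstOrder

/-- The Boolean subalgebra `𝔹_{αβ}(A)` of `L_{αβ}(M)` generated by the cylinders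
`X × M^β` for globally definable `X ∈ L_α(M)` together with all `A`-definable sets
in `L_{αβ}(A)`. -/
inductive BAlg (L : FirstOrder.Language) (M : Type*) [L.Structure M] (A : Set M)
    (α β : Type*) : Set (α ⊕ β → M) → Prop
  | cylinder (X : Set (α → M)) (hX : (Set.univ : Set M).Definable L X) :
      BAlg L M A α β (cyl Sum.inl X)
  | base (S : Set (α ⊕ β → M)) (hS : A.Definable L S) : BAlg L M A α β S
  | compl (S : Set (α ⊕ β → M)) : BAlg L M A α β S → BAlg L M A α β Sᶜ
  | union (S T : Set (α ⊕ β → M)) :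
      BAlg L M A α β S → BAlg L M A α β T → BAlg L M A α β (S ∪ T)

namespace ExtDomAux

variable {X : Type*}

/-- A Boolean algebra of subsets of `X`. -/
def IsAlg (𝒜 : Set (Set X)) : Prop :=
  Set.univ ∈ 𝒜 ∧ (∀ s ∈ 𝒜, sᶜ ∈ 𝒜) ∧ ∀ s ∈ 𝒜, ∀ t ∈ 𝒜, s ∪ t ∈ 𝒜

/-- A finitely additive probability measure on the algebra `𝒜`. -/
def IsMeasOn (𝒜 : Set (Set X)) (m : Set X → ℝ) : Prop :=
  m Set.univ = 1 ∧ (∀ s ∈ 𝒜, 0 ≤ m s) ∧ (∀ s ∈ 𝒜, m sᶜ = 1 - m s) ∧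
  ∀ s ∈ 𝒜, ∀ t ∈ 𝒜, m (s ∪ t) = m s + m t - m (s ∩ t)

variable {𝒜 : Set (Set X)} {m : Set X → ℝ}

lemma IsAlg.empty_mem (h : IsAlg 𝒜) : (∅ : Set X) ∈ 𝒜 := by
  have := h.2.1 _ h.1
  simpa using this

lemma IsAlg.inter_mem (h : IsAlg 𝒜) {s t : Set X} (hs : s ∈ 𝒜) (ht : t ∈ 𝒜) :
    s ∩ t ∈ 𝒜 := by
  have := h.2.1 _ (h.2.2 _ (h.2.1 _ hs) _ (h.2.1 _ ht))
  rwa [Set.compl_union, compl_compl, compl_compl] at this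

lemma IsAlg.diff_mem (h : IsAlg 𝒜) {s t : Set X} (hs : s ∈ 𝒜) (ht : t ∈ 𝒜) :
    s \ t ∈ 𝒜 := by
  rw [Set.diff_eq]; exact h.inter_mem hs (h.2.1 _ ht)

lemma IsMeasOn.empty (hA : IsAlg 𝒜) (hm : IsMeasOn 𝒜 m) : m ∅ = 0 := by
  have := hm.2.2.1 _ hA.1
  rw [Set.compl_univ, hm.1] at this
  simpa using this

lemma IsMeasOn.le_one (hA : IsAlg 𝒜) (hm : IsMeasOn 𝒜 m) {s : Set X} (hs : s ∈ 𝒜) :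
    m s ≤ 1 := by
  have h1 := hm.2.2.1 _ hs
  have h2 := hm.2.1 _ (hA.2.1 _ hs)
  linarith

lemma IsMeasOn.mono (hA : IsAlg 𝒜) (hm : IsMeasOn 𝒜 m) {s t : Set X}
    (hs : s ∈ 𝒜) (ht : t ∈ 𝒜) (hst : s ⊆ t) : m s ≤ m t := by
  have hd : t \ s ∈ 𝒜 := hA.diff_mem ht hs
  have hu := hm.2.2.2 _ hs _ hd
  rw [Set.union_diff_cancel hst, Set.inter_diff_self, hm.empty hA] at hu
  have := hm.2.1 _ hd
  linarith

/-- Inner measure of `T` with respect to the algebra `𝒜` and measure `m`. -/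
noncomputable def inn (𝒜 : Set (Set X)) (m : Set X → ℝ) (T : Set X) : ℝ :=
  sSup (m '' {G | G ∈ 𝒜 ∧ G ⊆ T})

/-- Outer measure of `T` with respect to the algebra `𝒜` and measure `m`. -/
noncomputable def out (𝒜 : Set (Set X)) (m : Set X → ℝ) (T : Set X) : ℝ :=
  sInf (m '' {G | G ∈ 𝒜 ∧ T ⊆ G})

lemma inn_set_nonempty (hA : IsAlg 𝒜) (T : Set X) :
    (m '' {G | G ∈ 𝒜 ∧ G ⊆ T}).Nonempty :=
  ⟨m ∅, ⟨∅, ⟨hA.empty_mem, Set.empty_subset T⟩, rfl⟩⟩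

lemma inn_set_bdd (hA : IsAlg 𝒜) (hm : IsMeasOn 𝒜 m) (T : Set X) :
    BddAbove (m '' {G | G ∈ 𝒜 ∧ G ⊆ T}) := by
  refine ⟨1, ?_⟩
  rintro r ⟨G, ⟨hG, -⟩, rfl⟩
  exact hm.le_one hA hG

lemma le_inn (hA : IsAlg 𝒜) (hm : IsMeasOn 𝒜 m) {G T : Set X} (hG : G ∈ 𝒜)
    (hGT : G ⊆ T) : m G ≤ inn 𝒜 m T :=
  le_csSup (inn_set_bdd hA hm T) ⟨G, ⟨hG, hGT⟩, rfl⟩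

lemma inn_le (hA : IsAlg 𝒜) {T : Set X} {c : ℝ}
    (h : ∀ G ∈ 𝒜, G ⊆ T → m G ≤ c) : inn 𝒜 m T ≤ c := by
  refine csSup_le (inn_set_nonempty hA T) ?_
  rintro r ⟨G, ⟨hG, hGT⟩, rfl⟩
  exact h G hG hGT

lemma inn_nonneg (hA : IsAlg 𝒜) (hm : IsMeasOn 𝒜 m) (T : Set X) : 0 ≤ inn 𝒜 m T := by
  have := le_inn hA hm hA.empty_mem (Set.empty_subset T)
  rw [hm.empty hA] at this; exact this

lemma inn_empty (hA : IsAlg 𝒜) (hm : IsMeasOn 𝒜 m) : inn 𝒜 m (∅ : Set X) = 0 := by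
  refine le_antisymm (inn_le hA ?_) (inn_nonneg hA hm ∅)
  intro G hG hGe
  rw [Set.subset_empty_iff.mp hGe, hm.empty hA]

lemma out_le (hA : IsAlg 𝒜) (hm : IsMeasOn 𝒜 m) {G T : Set X} (hG : G ∈ 𝒜)
    (hTG : T ⊆ G) : out 𝒜 m T ≤ m G := by
  refine csInf_le ⟨0, ?_⟩ ⟨G, ⟨hG, hTG⟩, rfl⟩
  rintro r ⟨H, ⟨hH, -⟩, rfl⟩
  exact hm.2.1 _ hH

lemma le_out (hA : IsAlg 𝒜) {T : Set X} {c : ℝ}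
    (h : ∀ G ∈ 𝒜, T ⊆ G → c ≤ m G) : c ≤ out 𝒜 m T := by
  refine le_csInf ⟨m Set.univ, ⟨Set.univ, ⟨hA.1, Set.subset_univ T⟩, rfl⟩⟩ ?_
  rintro r ⟨G, ⟨hG, hTG⟩, rfl⟩
  exact h G hG hTG

/-- The modular identity for the inner measure of traces on `E`. -/
lemma inn_modular (hA : IsAlg 𝒜) (hm : IsMeasOn 𝒜 m) {B D : Set X}
    (hB : B ∈ 𝒜) (hD : D ∈ 𝒜) (E : Set X) :
    inn 𝒜 m ((B ∪ D) ∩ E) + inn 𝒜 m ((B ∩ D) ∩ E)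
      = inn 𝒜 m (B ∩ E) + inn 𝒜 m (D ∩ E) := by
  apply le_antisymm
  · -- LHS ≤ RHS
    have h1 : inn 𝒜 m ((B ∪ D) ∩ E) ≤
        (inn 𝒜 m (B ∩ E) + inn 𝒜 m (D ∩ E)) - inn 𝒜 m ((B ∩ D) ∩ E) := by
      refine inn_le hA ?_
      intro G hG hGsub
      have h2 : inn 𝒜 m ((B ∩ D) ∩ E) ≤
          (inn 𝒜 m (B ∩ E) + inn 𝒜 m (D ∩ E)) - m G := by
        refine inn_le hA ?_
        intro H hH hHsub
        -- key combinatorial step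
        set G₁ := (G ∩ B) ∪ H with hG₁
        set G₂ := (G \ B) ∪ H with hG₂
        have hG₁A : G₁ ∈ 𝒜 := hA.2.2 _ (hA.inter_mem hG hB) _ hH
        have hG₂A : G₂ ∈ 𝒜 := hA.2.2 _ (hA.diff_mem hG hB) _ hH
        have hG₁sub : G₁ ⊆ B ∩ E := by
          rintro x (⟨hx1, hx2⟩ | hx)
          · exact ⟨hx2, (hGsub hx1).2⟩
          · exact ⟨(hHsub hx).1.1, (hHsub hx).2⟩
        have hG₂sub : G₂ ⊆ D ∩ E := by
          rintro x (⟨hx1, hx2⟩ | hx)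
          · rcases hGsub hx1 with ⟨hx3 | hx3, hx4⟩
            · exact absurd hx3 hx2
            · exact ⟨hx3, hx4⟩
          · exact ⟨(hHsub hx).1.2, (hHsub hx).2⟩
        have hunion : G₁ ∪ G₂ = G ∪ H := by
          ext x; simp only [hG₁, hG₂, Set.mem_union, Set.mem_inter_iff,
            Set.mem_diff]; tauto
        have hinter : G₁ ∩ G₂ = H := by
          ext x; simp only [hG₁, hG₂, Set.mem_union, Set.mem_inter_iff,
            Set.mem_diff]; tauto
        have hadd := hm.2.2.2 _ hG₁A _ hG₂A
        rw [hunion, hinter] at hadd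
        have hGle : m G ≤ m (G ∪ H) :=
          hm.mono hA hG (hA.2.2 _ hG _ hH) Set.subset_union_left
        have l1 := le_inn hA hm hG₁A hG₁sub
        have l2 := le_inn hA hm hG₂A hG₂sub
        linarith
      linarith
    linarith
  · -- RHS ≤ LHS
    have h1 : inn 𝒜 m (B ∩ E) ≤
        (inn 𝒜 m ((B ∪ D) ∩ E) + inn 𝒜 m ((B ∩ D) ∩ E)) - inn 𝒜 m (D ∩ E) := by
      refine inn_le hA ?_
      intro G hG hGsub
      have h2 : inn 𝒜 m (D ∩ E) ≤
          (inn 𝒜 m ((B ∪ D) ∩ E) + inn 𝒜 m ((B ∩ D) ∩ E)) - m G := by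
        refine inn_le hA ?_
        intro H hH hHsub
        have hadd := hm.2.2.2 _ hG _ hH
        have l1 : m (G ∪ H) ≤ inn 𝒜 m ((B ∪ D) ∩ E) := by
          refine le_inn hA hm (hA.2.2 _ hG _ hH) ?_
          rintro x (hx | hx)
          · exact ⟨Or.inl (hGsub hx).1, (hGsub hx).2⟩
          · exact ⟨Or.inr (hHsub hx).1, (hHsub hx).2⟩
        have l2 : m (G ∩ H) ≤ inn 𝒜 m ((B ∩ D) ∩ E) := by
          refine le_inn hA hm (hA.inter_mem hG hH) ?_
          rintro x ⟨hx1, hx2⟩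
          exact ⟨⟨(hGsub hx1).1, (hHsub hx2).1⟩, (hGsub hx1).2⟩
        linarith
      linarith
    linarith

/-- The outer measure of `B ∩ Eᶜ` in terms of the inner measure of `B ∩ E`. -/
lemma out_inter_compl (hA : IsAlg 𝒜) (hm : IsMeasOn 𝒜 m) {B : Set X}
    (hB : B ∈ 𝒜) (E : Set X) :
    out 𝒜 m (B ∩ Eᶜ) = m B - inn 𝒜 m (B ∩ E) := by
  apply le_antisymm
  · have : inn 𝒜 m (B ∩ E) ≤ m B - out 𝒜 m (B ∩ Eᶜ) := by
      refine inn_le hA ?_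
      intro G hG hGsub
      have hd : B \ G ∈ 𝒜 := hA.diff_mem hB hG
      have hsub : B ∩ Eᶜ ⊆ B \ G := by
        rintro x ⟨hx1, hx2⟩
        exact ⟨hx1, fun hxG => hx2 (hGsub hxG).2⟩
      have h1 : out 𝒜 m (B ∩ Eᶜ) ≤ m (B \ G) := out_le hA hm hd hsub
      have hGB : G ⊆ B := fun x hx => (hGsub hx).1
      have hadd := hm.2.2.2 _ hG _ hd
      rw [Set.union_diff_cancel hGB, Set.inter_diff_self, hm.empty hA] at hadd
      linarith
    linarith
  · refine le_out hA ?_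
    intro H hH hsub
    have hd : B \ H ∈ 𝒜 := hA.diff_mem hB hH
    have hdsub : B \ H ⊆ B ∩ E := by
      rintro x ⟨hx1, hx2⟩
      refine ⟨hx1, ?_⟩
      by_contra hxE
      exact hx2 (hsub ⟨hx1, hxE⟩)
    have l1 := le_inn hA hm hd hdsub
    have hadd := hm.2.2.2 _ (hA.inter_mem hB hH) _ hd
    have e1 : B ∩ H ∪ B \ H = B := Set.inter_union_diff B H
    have e2 : (B ∩ H) ∩ (B \ H) = ∅ := by ext x; simp [Set.mem_diff]; tauto
    rw [e1, e2, hm.empty hA] at hadd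
    have l2 : m (B ∩ H) ≤ m H := hm.mono hA (hA.inter_mem hB hH) hH Set.inter_subset_right
    linarith

/-- The algebra generated by `𝒜` and one further set `E`. -/
def gen (𝒜 : Set (Set X)) (E : Set X) : Set (Set X) :=
  {S | (∃ B ∈ 𝒜, S ∩ E = B ∩ E) ∧ ∃ B ∈ 𝒜, S ∩ Eᶜ = B ∩ Eᶜ}

lemma subset_gen (E : Set X) : 𝒜 ⊆ gen 𝒜 E :=
  fun S hS => ⟨⟨S, hS, rfl⟩, ⟨S, hS, rfl⟩⟩

lemma mem_gen_self (hA : IsAlg 𝒜) (E : Set X) : E ∈ gen 𝒜 E :=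
  ⟨⟨Set.univ, hA.1, by simp⟩, ⟨∅, hA.empty_mem, by simp⟩⟩

lemma gen_isAlg (hA : IsAlg 𝒜) (E : Set X) : IsAlg (gen 𝒜 E) := by
  refine ⟨subset_gen E hA.1, ?_, ?_⟩
  · rintro S ⟨⟨B₁, hB₁, e₁⟩, ⟨B₂, hB₂, e₂⟩⟩
    refine ⟨⟨B₁ᶜ, hA.2.1 _ hB₁, ?_⟩, ⟨B₂ᶜ, hA.2.1 _ hB₂, ?_⟩⟩
    · rw [Set.ext_iff] at e₁ ⊢
      intro x; have := e₁ x
      simp only [Set.mem_inter_iff, Set.mem_compl_iff] at this ⊢; tauto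
    · rw [Set.ext_iff] at e₂ ⊢
      intro x; have := e₂ x
      simp only [Set.mem_inter_iff, Set.mem_compl_iff] at this ⊢; tauto
  · rintro S ⟨⟨B₁, hB₁, e₁⟩, ⟨B₂, hB₂, e₂⟩⟩ T ⟨⟨C₁, hC₁, f₁⟩, ⟨C₂, hC₂, f₂⟩⟩
    refine ⟨⟨B₁ ∪ C₁, hA.2.2 _ hB₁ _ hC₁, ?_⟩, ⟨B₂ ∪ C₂, hA.2.2 _ hB₂ _ hC₂, ?_⟩⟩
    · rw [Set.union_inter_distrib_right, e₁, f₁, Set.union_inter_distrib_right]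
    · rw [Set.union_inter_distrib_right, e₂, f₂, Set.union_inter_distrib_right]

lemma gen_subset {𝒟 : Set (Set X)} (hD : IsAlg 𝒟) (hAD : 𝒜 ⊆ 𝒟) {E : Set X}
    (hE : E ∈ 𝒟) : gen 𝒜 E ⊆ 𝒟 := by
  rintro S ⟨⟨B₁, hB₁, e₁⟩, ⟨B₂, hB₂, e₂⟩⟩
  have : S = (B₁ ∩ E) ∪ (B₂ ∩ Eᶜ) := by
    rw [← e₁, ← e₂, ← Set.inter_union_distrib_left, Set.union_compl_self,
      Set.inter_univ]
  rw [this]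
  exact hD.2.2 _ (hD.inter_mem (hAD hB₁) hE) _ (hD.inter_mem (hAD hB₂) (hD.2.1 _ hE))

/-- The one–step (Łoś–Marczewski) extension of `m` to `gen 𝒜 E`, giving `E`
its inner measure. -/
noncomputable def ext1 (𝒜 : Set (Set X)) (m : Set X → ℝ) (E : Set X) :
    Set X → ℝ :=
  fun S => inn 𝒜 m (S ∩ E) + out 𝒜 m (S ∩ Eᶜ)

lemma inn_compl_add (hA : IsAlg 𝒜) (hm : IsMeasOn 𝒜 m) {B : Set X} (hB : B ∈ 𝒜)
    (E : Set X) : inn 𝒜 m (B ∩ E) + inn 𝒜 m (Bᶜ ∩ E) = inn 𝒜 m E := by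
  have := inn_modular hA hm hB (hA.2.1 _ hB) E
  rw [Set.union_compl_self, Set.inter_compl_self, Set.univ_inter, Set.empty_inter,
    inn_empty hA hm] at this
  linarith

lemma one_step (hA : IsAlg 𝒜) (hm : IsMeasOn 𝒜 m) (E : Set X) :
    IsMeasOn (gen 𝒜 E) (ext1 𝒜 m E) ∧ (∀ s ∈ 𝒜, ext1 𝒜 m E s = m s) ∧
      ext1 𝒜 m E E = inn 𝒜 m E := by
  have hrestr : ∀ s ∈ 𝒜, ext1 𝒜 m E s = m s := by
    intro s hs
    unfold ext1
    rw [out_inter_compl hA hm hs E]; ring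
  have hout_empty : out 𝒜 m (∅ : Set X) = 0 := by
    have := out_inter_compl hA hm hA.empty_mem E
    rw [Set.empty_inter, Set.empty_inter, inn_empty hA hm, hm.empty hA] at this
    linarith
  refine ⟨⟨?_, ?_, ?_, ?_⟩, hrestr, ?_⟩
  · rw [hrestr _ hA.1, hm.1]
  · intro s _
    unfold ext1
    have h1 := inn_nonneg hA hm (s ∩ E)
    have h2 : (0:ℝ) ≤ out 𝒜 m (s ∩ Eᶜ) := le_out hA (fun G hG _ => hm.2.1 _ hG)
    linarith
  · rintro S ⟨⟨B₁, hB₁, e₁⟩, ⟨B₂, hB₂, e₂⟩⟩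
    have ec₁ : Sᶜ ∩ E = B₁ᶜ ∩ E := by
      rw [Set.ext_iff] at e₁ ⊢
      intro x; have := e₁ x
      simp only [Set.mem_inter_iff, Set.mem_compl_iff] at this ⊢; tauto
    have ec₂ : Sᶜ ∩ Eᶜ = B₂ᶜ ∩ Eᶜ := by
      rw [Set.ext_iff] at e₂ ⊢
      intro x; have := e₂ x
      simp only [Set.mem_inter_iff, Set.mem_compl_iff] at this ⊢; tauto
    unfold ext1
    rw [ec₁, ec₂, e₁, e₂, out_inter_compl hA hm hB₂ E,
      out_inter_compl hA hm (hA.2.1 _ hB₂) E]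
    have c1 := inn_compl_add hA hm hB₁ E
    have c2 := inn_compl_add hA hm hB₂ E
    have c3 := hm.2.2.1 _ hB₂
    linarith
  · rintro S ⟨⟨B₁, hB₁, e₁⟩, ⟨B₂, hB₂, e₂⟩⟩ T ⟨⟨C₁, hC₁, f₁⟩, ⟨C₂, hC₂, f₂⟩⟩
    have eu₁ : (S ∪ T) ∩ E = (B₁ ∪ C₁) ∩ E := by
      rw [Set.union_inter_distrib_right, e₁, f₁, Set.union_inter_distrib_right]
    have eu₂ : (S ∪ T) ∩ Eᶜ = (B₂ ∪ C₂) ∩ Eᶜ := by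
      rw [Set.union_inter_distrib_right, e₂, f₂, Set.union_inter_distrib_right]
    have ei₁ : (S ∩ T) ∩ E = (B₁ ∩ C₁) ∩ E := by
      rw [Set.ext_iff] at e₁ f₁ ⊢
      intro x; have h1 := e₁ x; have h2 := f₁ x
      simp only [Set.mem_inter_iff] at h1 h2 ⊢; tauto
    have ei₂ : (S ∩ T) ∩ Eᶜ = (B₂ ∩ C₂) ∩ Eᶜ := by
      rw [Set.ext_iff] at e₂ f₂ ⊢
      intro x; have h1 := e₂ x; have h2 := f₂ x
      simp only [Set.mem_inter_iff] at h1 h2 ⊢; tauto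
    unfold ext1
    rw [eu₁, eu₂, ei₁, ei₂, e₁, e₂, f₁, f₂,
      out_inter_compl hA hm hB₂ E, out_inter_compl hA hm hC₂ E,
      out_inter_compl hA hm (hA.2.2 _ hB₂ _ hC₂) E,
      out_inter_compl hA hm (hA.inter_mem hB₂ hC₂) E]
    have minn1 := inn_modular hA hm hB₁ hC₁ E
    have minn2 := inn_modular hA hm hB₂ hC₂ E
    have madd := hm.2.2.2 _ hB₂ _ hC₂
    linarith
  · unfold ext1
    rw [Set.inter_self, Set.inter_compl_self, hout_empty]
    ring

/-- Any finitely additive probability measure on a subalgebra `𝒜` of an algebra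
`𝒟` of subsets of `X` extends to `𝒟`. -/
lemma extend_meas {𝒟 : Set (Set X)} (hD : IsAlg 𝒟) (hA : IsAlg 𝒜) (hAD : 𝒜 ⊆ 𝒟)
    (hm : IsMeasOn 𝒜 m) :
    ∃ m' : Set X → ℝ, IsMeasOn 𝒟 m' ∧ ∀ s ∈ 𝒜, m' s = m s := by
  classical
  -- we work with graphs of partial measures
  set P : Set (Set (Set X × ℝ)) :=
    {F | ∃ 𝒜' : Set (Set X), ∃ m' : Set X → ℝ, IsAlg 𝒜' ∧ 𝒜 ⊆ 𝒜' ∧ 𝒜' ⊆ 𝒟 ∧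
      IsMeasOn 𝒜' m' ∧ (∀ s ∈ 𝒜, m' s = m s) ∧
      F = {p | p.1 ∈ 𝒜' ∧ p.2 = m' p.1}} with hP
  have hF₀ : {p : Set X × ℝ | p.1 ∈ 𝒜 ∧ p.2 = m p.1} ∈ P :=
    ⟨𝒜, m, hA, le_refl 𝒜, hAD, hm, fun s _ => rfl, rfl⟩
  -- chains have upper bounds
  have hchain : ∀ c ⊆ P, IsChain (· ⊆ ·) c → c.Nonempty → ∃ ub ∈ P, ∀ F ∈ c, F ⊆ ub := by
    intro c hcP hc hcne
    set U : Set (Set X × ℝ) := ⋃₀ c with hU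
    -- functionality of U
    have hfun : ∀ s r₁ r₂, (s, r₁) ∈ U → (s, r₂) ∈ U → r₁ = r₂ := by
      rintro s r₁ r₂ ⟨F₁, hF₁c, h₁⟩ ⟨F₂, hF₂c, h₂⟩
      rcases hc.total hF₁c hF₂c with h | h
      · obtain ⟨𝒜', m', -, -, -, -, -, rfl⟩ := hcP hF₂c
        exact (h h₁).2.trans h₂.2.symm
      · obtain ⟨𝒜', m', -, -, -, -, -, rfl⟩ := hcP hF₁c
        exact h₁.2.trans ((h h₂).2).symm
    set 𝒜' : Set (Set X) := {s | ∃ r, (s, r) ∈ U} with h𝒜'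
    set m' : Set X → ℝ := fun s => if h : ∃ r, (s, r) ∈ U then h.choose else 0 with hm'
    have hval : ∀ s r, (s, r) ∈ U → m' s = r := by
      intro s r hsr
      have h : ∃ r, (s, r) ∈ U := ⟨r, hsr⟩
      rw [hm']
      simp only [dif_pos h]
      exact hfun s h.choose r h.choose_spec hsr
    -- each member of the chain gives its algebra inside 𝒜'
    have hmem : ∀ F ∈ c, ∀ p ∈ F, p.1 ∈ 𝒜' ∧ m' p.1 = p.2 := by
      intro F hFc p hpF
      have hpU : p ∈ U := ⟨F, hFc, hpF⟩
      exact ⟨⟨p.2, hpU⟩, hval p.1 p.2 hpU⟩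
    -- the union is the graph of m' on 𝒜'
    have hgraph : U = {p : Set X × ℝ | p.1 ∈ 𝒜' ∧ p.2 = m' p.1} := by
      ext ⟨s, r⟩
      constructor
      · intro hsr
        exact ⟨⟨r, hsr⟩, (hval s r hsr).symm⟩
      · rintro ⟨⟨r', hr'⟩, hr⟩
        have := hval s r' hr'
        rw [show r = r' from hr.trans this]
        exact hr'
    -- for any finitely many sets in 𝒜', find one chain member containing all
    have hup2 : ∀ s ∈ 𝒜', ∀ t ∈ 𝒜', ∃ F ∈ c, ∃ 𝒜'' : Set (Set X), ∃ m'' : Set X → ℝ,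
        IsAlg 𝒜'' ∧ 𝒜 ⊆ 𝒜'' ∧ 𝒜'' ⊆ 𝒟 ∧ IsMeasOn 𝒜'' m'' ∧
        F = {p | p.1 ∈ 𝒜'' ∧ p.2 = m'' p.1} ∧ s ∈ 𝒜'' ∧ t ∈ 𝒜'' ∧
        (∀ u ∈ 𝒜'', u ∈ 𝒜' ∧ m' u = m'' u) := by
      rintro s ⟨r₁, F₁, hF₁c, h₁⟩ t ⟨r₂, F₂, hF₂c, h₂⟩
      have key : ∀ F ∈ c, (s, r₁) ∈ F → (t, r₂) ∈ F →
          ∃ F ∈ c, ∃ 𝒜'' : Set (Set X), ∃ m'' : Set X → ℝ,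
          IsAlg 𝒜'' ∧ 𝒜 ⊆ 𝒜'' ∧ 𝒜'' ⊆ 𝒟 ∧ IsMeasOn 𝒜'' m'' ∧
          F = {p | p.1 ∈ 𝒜'' ∧ p.2 = m'' p.1} ∧ s ∈ 𝒜'' ∧ t ∈ 𝒜'' ∧
          (∀ u ∈ 𝒜'', u ∈ 𝒜' ∧ m' u = m'' u) := by
        intro F hFc hsF htF
        obtain ⟨𝒜'', m'', hAlg, hsub1, hsub2, hmeas, -, rfl⟩ := hcP hFc
        refine ⟨_, hFc, 𝒜'', m'', hAlg, hsub1, hsub2, hmeas, rfl, hsF.1, htF.1, ?_⟩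
        intro u hu
        have : ((u, m'' u) : Set X × ℝ) ∈ U := ⟨_, hFc, ⟨hu, rfl⟩⟩
        exact ⟨⟨m'' u, this⟩, hval u (m'' u) this⟩
      rcases hc.total hF₁c hF₂c with h | h
      · exact key F₂ hF₂c (h h₁) h₂
      · exact key F₁ hF₁c h₁ (h h₂)
    obtain ⟨F₀, hF₀c⟩ := hcne
    obtain ⟨𝒜₀, m₀, hAlg₀, hsubA₀, hsubD₀, hmeas₀, hres₀, hF₀eq⟩ := hcP hF₀c
    have hAsub : 𝒜 ⊆ 𝒜' := by
      intro s hs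
      exact ⟨m₀ s, F₀, hF₀c, by rw [hF₀eq]; exact ⟨hsubA₀ hs, rfl⟩⟩
    have h𝒜'D : 𝒜' ⊆ 𝒟 := by
      rintro s ⟨r, F, hFc, hsF⟩
      obtain ⟨𝒜'', m'', -, -, hsub2, -, -, rfl⟩ := hcP hFc
      exact hsub2 hsF.1
    have hAlg' : IsAlg 𝒜' := by
      refine ⟨?_, ?_, ?_⟩
      · exact hAsub hA.1
      · intro s hs
        obtain ⟨F, hFc, 𝒜'', m'', hAlg, -, -, -, rfl, hs'', -, hmm⟩ := hup2 s hs s hs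
        exact (hmm _ (hAlg.2.1 _ hs'')).1
      · intro s hs t ht
        obtain ⟨F, hFc, 𝒜'', m'', hAlg, -, -, -, rfl, hs'', ht'', hmm⟩ := hup2 s hs t ht
        exact (hmm _ (hAlg.2.2 _ hs'' _ ht'')).1
    have hmeas' : IsMeasOn 𝒜' m' := by
      refine ⟨?_, ?_, ?_, ?_⟩
      · obtain ⟨F, hFc, 𝒜'', m'', hAlg, -, -, hmeas, rfl, hs'', -, hmm⟩ :=
          hup2 _ (hAsub hA.1) _ (hAsub hA.1)
        rw [(hmm _ hAlg.1).2, hmeas.1]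
      · intro s hs
        obtain ⟨F, hFc, 𝒜'', m'', hAlg, -, -, hmeas, rfl, hs'', -, hmm⟩ := hup2 s hs s hs
        rw [(hmm _ hs'').2]
        exact hmeas.2.1 _ hs''
      · intro s hs
        obtain ⟨F, hFc, 𝒜'', m'', hAlg, -, -, hmeas, rfl, hs'', -, hmm⟩ := hup2 s hs s hs
        rw [(hmm _ hs'').2, (hmm _ (hAlg.2.1 _ hs'')).2]
        exact hmeas.2.2.1 _ hs''
      · intro s hs t ht
        obtain ⟨F, hFc, 𝒜'', m'', hAlg, -, -, hmeas, rfl, hs'', ht'', hmm⟩ := hup2 s hs t ht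
        rw [(hmm _ hs'').2, (hmm _ ht'').2, (hmm _ (hAlg.2.2 _ hs'' _ ht'')).2,
          (hmm _ (hAlg.inter_mem hs'' ht'')).2]
        exact hmeas.2.2.2 _ hs'' _ ht''
    have hres' : ∀ s ∈ 𝒜, m' s = m s := by
      intro s hs
      have : ((s, m₀ s) : Set X × ℝ) ∈ U := ⟨F₀, hF₀c, by rw [hF₀eq]; exact ⟨hsubA₀ hs, rfl⟩⟩
      rw [hval s (m₀ s) this, hres₀ s hs]
    refine ⟨U, ⟨𝒜', m', hAlg', hAsub, h𝒜'D, hmeas', hres', hgraph⟩, ?_⟩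
    intro F hFc
    exact fun p hp => ⟨F, hFc, hp⟩
  obtain ⟨Fmax, -, hFmaxP, hmax⟩ := zorn_subset_nonempty P hchain _ hF₀
  obtain ⟨𝒜s, ms, hAlgs, hAsubs, hDs, hmeass, hress, hFeqs⟩ := hFmaxP
  -- the maximal algebra must be all of 𝒟
  have hfull : 𝒜s = 𝒟 := by
    by_contra hne
    obtain ⟨E, hED, hEA⟩ : ∃ E, E ∈ 𝒟 ∧ E ∉ 𝒜s := by
      by_contra h
      push_neg at h
      exact hne (le_antisymm hDs h)
    obtain ⟨hmeas1, hres1, -⟩ := one_step hAlgs hmeass E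
    set F' : Set (Set X × ℝ) := {p | p.1 ∈ gen 𝒜s E ∧ p.2 = ext1 𝒜s ms E p.1} with hF'
    have hF'P : F' ∈ P := by
      refine ⟨gen 𝒜s E, ext1 𝒜s ms E, gen_isAlg hAlgs E,
        hAsubs.trans (subset_gen E), gen_subset hD hDs hED, hmeas1, ?_, rfl⟩
      intro s hs
      rw [hres1 s (hAsubs hs), hress s hs]
    have hsub : Fmax ⊆ F' := by
      rintro ⟨s, r⟩ hsr
      rw [hFeqs] at hsr
      exact ⟨subset_gen E hsr.1, by rw [hsr.2, hres1 _ hsr.1]⟩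
    have : F' = Fmax := le_antisymm (hmax hF'P hsub) hsub
    apply hEA
    have hEF : ((E, ext1 𝒜s ms E E) : Set X × ℝ) ∈ F' := ⟨mem_gen_self hAlgs E, rfl⟩
    rw [this, hFeqs] at hEF
    exact hEF.1
  subst hfull
  exact ⟨ms, hmeass, hress⟩

lemma key_extend {𝒟 : Set (Set X)} (hD : IsAlg 𝒟) (hA : IsAlg 𝒜) (hAD : 𝒜 ⊆ 𝒟)
    (hm : IsMeasOn 𝒜 m) {E : Set X} (hE : E ∈ 𝒟) :
    ∃ m' : Set X → ℝ, IsMeasOn 𝒟 m' ∧ (∀ s ∈ 𝒜, m' s = m s) ∧ m' E = inn 𝒜 m E := by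
  obtain ⟨hmeas1, hres1, hval1⟩ := one_step hA hm E
  obtain ⟨m', hm', hres'⟩ := extend_meas hD (gen_isAlg hA E)
    (gen_subset hD hAD hE) hmeas1
  exact ⟨m', hm', fun s hs => (hres' s (subset_gen E hs)).trans (hres1 s hs),
    (hres' E (mem_gen_self hA E)).trans hval1⟩

lemma exists_inner_approx (hA : IsAlg 𝒜) {T : Set X} {a : ℝ}
    (h : a < inn 𝒜 m T) : ∃ G ∈ 𝒜, G ⊆ T ∧ a < m G := by
  obtain ⟨r, ⟨G, ⟨hG, hGT⟩, rfl⟩, hrlt⟩ :=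
    exists_lt_of_lt_csSup (inn_set_nonempty hA T) h
  exact ⟨G, hG, hGT, hrlt⟩

end ExtDomAux


open ExtDomAux in
lemma cyl_preimage {M α β : Type*} (f : α → β) (S : Set (α → M)) :
    cyl f S = (fun g : β → M => g ∘ f) ⁻¹' S := rfl

lemma BAlg_definable {L : FirstOrder.Language} {M : Type*} [L.Structure M]
    {A : Set M} {α β : Type*} {S : Set (α ⊕ β → M)} (h : BAlg L M A α β S) :
    (Set.univ : Set M).Definable L S := by
  induction h with
  | cylinder X hX => rw [cyl_preimage]; exact hX.preimage_comp Sum.inl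
  | base S hS => exact hS.mono (Set.subset_univ A)
  | compl S _ ih => exact ih.compl
  | union S T _ _ ih1 ih2 => exact ih1.union ih2

/-- Approximation property: if `λ` witnesses `μ ≥_{E,A} ν`, then for every
`ω ∈ E(λ,μ)`, every globally definable `D ∈ L_β(M)` and every `ε > 0` there are
`G⁻, G⁺ ∈ 𝔹_{αβ}(A)` with `G⁻ ⊆ M^α × D ⊆ G⁺`, `ω(G⁺) − ω(G⁻) < ε`, and
`|ω(G^±) − ν(D)| < ε`. -/

theorem extDom_approximation {L : FirstOrder.Language} {M : Type*} [L.Structure M]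
    (A : Set M) {α β : Type*}
    (mu : KeislerMeasure L M (Set.univ : Set M) α)
    (nu : KeislerMeasure L M (Set.univ : Set M) β)
    (lam : KeislerMeasure L M A (α ⊕ β))
    (hmarg : ∀ X : Set (α → M), A.Definable L X →
      lam.toFun (cyl Sum.inl X) = mu.toFun X)
    (hwit : ∀ om ∈ extSpace L A lam mu, ∀ Y : Set (β → M),
      (Set.univ : Set M).Definable L Y → om.toFun (cyl Sum.inr Y) = nu.toFun Y) :
    ∀ om ∈ extSpace L A lam mu, ∀ D : Set (β → M),
      (Set.univ : Set M).Definable L D → ∀ ε : ℝ, 0 < ε →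
      ∃ Gm Gp : Set (α ⊕ β → M), BAlg L M A α β Gm ∧ BAlg L M A α β Gp ∧
        Gm ⊆ cyl Sum.inr D ∧ cyl Sum.inr D ⊆ Gp ∧
        om.toFun Gp - om.toFun Gm < ε ∧
        |om.toFun Gm - nu.toFun D| < ε ∧ |om.toFun Gp - nu.toFun D| < ε := by
  classical
  intro om hom D hD ε hε
  set 𝒟 : Set (Set (α ⊕ β → M)) := {S | (Set.univ : Set M).Definable L S} with h𝒟
  have hDalg : ExtDomAux.IsAlg 𝒟 :=
    ⟨Set.definable_univ, fun s hs => hs.compl, fun s hs t ht => hs.union ht⟩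
  set 𝒜 : Set (Set (α ⊕ β → M)) := setOf (BAlg L M A α β) with h𝒜
  have hAalg : ExtDomAux.IsAlg 𝒜 :=
    ⟨BAlg.base _ Set.definable_univ, fun s hs => BAlg.compl s hs,
      fun s hs t ht => BAlg.union s t hs ht⟩
  have hAD : 𝒜 ⊆ 𝒟 := fun S hS => BAlg_definable hS
  have hom_meas : ExtDomAux.IsMeasOn 𝒟 om.toFun :=
    ⟨om.measure_univ, fun s hs => om.nonneg' s hs, fun s hs => om.compl' s hs,
      fun s hs t ht => om.union_inter' s t hs ht⟩
  have hom_measA : ExtDomAux.IsMeasOn 𝒜 om.toFun :=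
    ⟨om.measure_univ, fun s hs => om.nonneg' s (hAD hs), fun s hs => om.compl' s (hAD hs),
      fun s hs t ht => om.union_inter' s t (hAD hs) (hAD ht)⟩
  -- the inner measure relative to 𝔹_{αβ}(A) of any fibred definable set
  -- agrees with ω on that set
  have key : ∀ Y : Set (β → M), (Set.univ : Set M).Definable L Y →
      ExtDomAux.inn 𝒜 om.toFun (cyl Sum.inr Y) = om.toFun (cyl Sum.inr Y) := by
    intro Y hY
    have hCY : cyl Sum.inr Y ∈ 𝒟 := by
      show (Set.univ : Set M).Definable L (cyl Sum.inr Y)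
      rw [cyl_preimage]; exact hY.preimage_comp Sum.inr
    obtain ⟨m', hm', hres', hval'⟩ :=
      ExtDomAux.key_extend hDalg hAalg hAD hom_measA hCY
    set om' : KeislerMeasure L M (Set.univ : Set M) (α ⊕ β) :=
      ⟨m', hm'.1, fun s hs => hm'.2.1 s hs, fun s hs => hm'.2.2.1 s hs,
        fun s t hs ht => hm'.2.2.2 s hs t ht⟩ with hom'def
    have hom' : om' ∈ extSpace L A lam mu := by
      constructor
      · intro S hS
        have hS𝒜 : S ∈ 𝒜 := BAlg.base S hS
        show m' S = lam.toFun S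
        rw [hres' S hS𝒜]
        exact hom.1 S hS
      · intro Z hZ
        have hZ𝒜 : cyl Sum.inl Z ∈ 𝒜 := BAlg.cylinder Z hZ
        show m' (cyl Sum.inl Z) = mu.toFun Z
        rw [hres' _ hZ𝒜]
        exact hom.2 Z hZ
    have h1 : m' (cyl Sum.inr Y) = nu.toFun Y := hwit om' hom' Y hY
    have h2 : om.toFun (cyl Sum.inr Y) = nu.toFun Y := hwit om hom Y hY
    exact (hval'.symm.trans h1).trans h2.symm
  set C := cyl Sum.inr D with hCdef
  have hC𝒟 : C ∈ 𝒟 := by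
    show (Set.univ : Set M).Definable L C
    rw [hCdef, cyl_preimage]; exact hD.preimage_comp Sum.inr
  have hCc : Cᶜ = cyl Sum.inr Dᶜ := rfl
  have k1 : ExtDomAux.inn 𝒜 om.toFun C = om.toFun C := key D hD
  have k2 : ExtDomAux.inn 𝒜 om.toFun Cᶜ = om.toFun Cᶜ := by
    rw [hCc]; exact key Dᶜ hD.compl
  obtain ⟨G, hG𝒜, hGC, hGgt⟩ := ExtDomAux.exists_inner_approx hAalg
    (show om.toFun C - ε/2 < ExtDomAux.inn 𝒜 om.toFun C by rw [k1]; linarith)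
  obtain ⟨H, hH𝒜, hHCc, hHgt⟩ := ExtDomAux.exists_inner_approx hAalg
    (show om.toFun Cᶜ - ε/2 < ExtDomAux.inn 𝒜 om.toFun Cᶜ by rw [k2]; linarith)
  have hG𝒟 : G ∈ 𝒟 := hAD hG𝒜
  have hH𝒟 : H ∈ 𝒟 := hAD hH𝒜
  have homCc : om.toFun Cᶜ = 1 - om.toFun C := om.compl' C hC𝒟
  have homHc : om.toFun Hᶜ = 1 - om.toFun H := om.compl' H hH𝒟
  have hCsubHc : C ⊆ Hᶜ := fun x hx hxH => hHCc hxH hx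
  have hmono1 : om.toFun G ≤ om.toFun C :=
    hom_meas.mono hDalg hG𝒟 hC𝒟 hGC
  have hmono2 : om.toFun C ≤ om.toFun Hᶜ :=
    hom_meas.mono hDalg hC𝒟 (hDalg.2.1 _ hH𝒟) hCsubHc
  have hνD : om.toFun C = nu.toFun D := hwit om hom D hD
  rw [homCc] at hHgt
  refine ⟨G, Hᶜ, hG𝒜, BAlg.compl H hH𝒜, hGC, hCsubHc, ?_, ?_, ?_⟩
  · linarith
  · rw [← hνD, abs_lt]; constructor <;> linarith
  · rw [← hνD, abs_lt]; constructor <;> linarith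
end

section
/- Suppose μ ∈ 𝔐_x(M) extension dominates ν ∈ 𝔐_y(M) over A and λ ∈ 𝔐_xy(A) witnesses the domination. Then for every D ∈ L_y(M) and every ε > 0, there exist sets G_ε⁻, G_ε⁺ ∈ 𝔹_xy(A), independent of ω, such that: (1) G_ε⁻ ⊆ M^x × D ⊆ G_ε⁺; (2) for every ω ∈ E(λ,μ), ω(G_ε⁺) − ω(G_ε⁻) < ε; and (3) for every ω ∈ E(λ,μ), |ω(G_ε⁻) − ν(D)| < ε and |ω(G_ε⁺) − ν(D)| < ε. -/
open FirstOrder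

/-! ### Basic lemmas about Keisler measures -/

namespace KeislerMeasure

variable {L : FirstOrder.Language} {M : Type*} [L.Structure M] {A : Set M} {α : Type*}

theorem empty (K : KeislerMeasure L M A α) : K.toFun (∅ : Set (α → M)) = 0 := by
  have h := K.compl' Set.univ (Set.definable_univ)
  rw [Set.compl_univ, K.measure_univ] at h
  simpa using h

theorem le_one (K : KeislerMeasure L M A α) {s : Set (α → M)} (hs : A.Definable L s) :
    K.toFun s ≤ 1 := by
  have h := K.compl' s hs
  have h2 := K.nonneg' sᶜ hs.compl
  linarith

theorem add_disjoint (K : KeislerMeasure L M A α) {s t : Set (α → M)}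
    (hs : A.Definable L s) (ht : A.Definable L t) (hst : s ∩ t = ∅) :
    K.toFun (s ∪ t) = K.toFun s + K.toFun t := by
  have h := K.union_inter' s t hs ht
  rw [hst, K.empty] at h
  linarith

theorem mono (K : KeislerMeasure L M A α) {s t : Set (α → M)}
    (hs : A.Definable L s) (ht : A.Definable L t) (hst : s ⊆ t) :
    K.toFun s ≤ K.toFun t := by
  have hd : A.Definable L (t ∩ sᶜ) := ht.inter hs.compl
  have hu : s ∪ (t ∩ sᶜ) = t := by
    ext x; constructor
    · rintro (hx | ⟨hx, _⟩); exacts [hst hx, hx]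
    · intro hx; by_cases hxs : x ∈ s
      · exact Or.inl hxs
      · exact Or.inr ⟨hx, hxs⟩
  have hdisj : s ∩ (t ∩ sᶜ) = ∅ := by
    ext x; simp only [Set.mem_inter_iff, Set.mem_compl_iff, Set.mem_empty_iff_false]
    tauto
  have := K.add_disjoint hs hd hdisj
  rw [hu] at this
  have := K.nonneg' _ hd
  linarith

theorem mem_Icc (K : KeislerMeasure L M A α) {s : Set (α → M)} (hs : A.Definable L s) :
    K.toFun s ∈ Set.Icc (0:ℝ) 1 := ⟨K.nonneg' s hs, K.le_one hs⟩

end KeislerMeasure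

/-! ### Basic lemmas about `cyl` and `BAlg` -/

theorem cyl_definable {L : FirstOrder.Language} {M : Type*} [L.Structure M]
    {A : Set M} {α β : Type*} (f : α → β) {S : Set (α → M)} (hS : A.Definable L S) :
    A.Definable L (cyl f S) :=
  hS.preimage_comp f

theorem cyl_compl {M : Type*} {α β : Type*} (f : α → β) (S : Set (α → M)) :
    cyl f Sᶜ = (cyl f S)ᶜ := rfl

namespace BAlg

variable {L : FirstOrder.Language} {M : Type*} [L.Structure M] {A : Set M} {α β : Type*}

theorem definable {S : Set (α ⊕ β → M)} (h : BAlg L M A α β S) :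
    (Set.univ : Set M).Definable L S := by
  induction h with
  | cylinder X hX => exact cyl_definable Sum.inl hX
  | base S hS => exact hS.mono (Set.subset_univ A)
  | compl S _ ih => exact ih.compl
  | union S T _ _ ihS ihT => exact ihS.union ihT

theorem empty' : BAlg L M A α β (∅ : Set (α ⊕ β → M)) :=
  BAlg.base ∅ (Set.definable_empty)

theorem univ' : BAlg L M A α β (Set.univ : Set (α ⊕ β → M)) :=
  BAlg.base Set.univ (Set.definable_univ)

theorem inter {S T : Set (α ⊕ β → M)} (hS : BAlg L M A α β S) (hT : BAlg L M A α β T) :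
    BAlg L M A α β (S ∩ T) := by
  have : S ∩ T = (Sᶜ ∪ Tᶜ)ᶜ := by rw [Set.compl_union, compl_compl, compl_compl]
  rw [this]
  exact BAlg.compl _ (BAlg.union _ _ (BAlg.compl _ hS) (BAlg.compl _ hT))

end BAlg

/-! ### Atoms machinery and the key positivity ("uber") lemma -/

section Uber

open Classical in
theorem BAlg.biInter {L : FirstOrder.Language} {M : Type*} [L.Structure M] {A : Set M}
    {α β : Type*} {ι : Type*} (s : Finset ι) (f : ι → Set (α ⊕ β → M))
    (hf : ∀ i ∈ s, BAlg L M A α β (f i)) : BAlg L M A α β (⋂ i ∈ s, f i) := by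
  classical
  induction s using Finset.induction_on with
  | empty => simpa using BAlg.univ'
  | insert a t hx ih =>
    rw [Finset.set_biInter_insert]
    exact (hf a (Finset.mem_insert_self a t)).inter
      (ih fun i hi => hf i (Finset.mem_insert_of_mem hi))

theorem BAlg.biUnion {L : FirstOrder.Language} {M : Type*} [L.Structure M] {A : Set M}
    {α β : Type*} {ι : Type*} (s : Finset ι) (f : ι → Set (α ⊕ β → M))
    (hf : ∀ i ∈ s, BAlg L M A α β (f i)) : BAlg L M A α β (⋃ i ∈ s, f i) := by
  classical
  induction s using Finset.induction_on with
  | empty => simpa using BAlg.empty'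
  | insert a t hx ih =>
    rw [Finset.set_biUnion_insert]
    exact BAlg.union _ _ (hf a (Finset.mem_insert_self a t))
      (ih fun i hi => hf i (Finset.mem_insert_of_mem hi))

variable {L : FirstOrder.Language} {M : Type*} [L.Structure M] {A : Set M} {α β : Type*}

/-- Finite additivity over a finite disjoint family of `BAlg` sets. -/
theorem KeislerMeasure.sum_disjoint_s13 {ι : Type*}
    (om : KeislerMeasure L M (Set.univ : Set M) (α ⊕ β))
    (𝒦 : Finset ι) (B : ι → Set (α ⊕ β → M))
    (hB : ∀ K ∈ 𝒦, BAlg L M A α β (B K))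
    (hdisj : ∀ K ∈ 𝒦, ∀ K' ∈ 𝒦, K ≠ K' → B K ∩ B K' = ∅) :
    om.toFun (⋃ K ∈ 𝒦, B K) = ∑ K ∈ 𝒦, om.toFun (B K) := by
  classical
  induction 𝒦 using Finset.induction_on with
  | empty => simpa using om.empty
  | insert a t hx ih =>
    rw [Finset.set_biUnion_insert, Finset.sum_insert hx]
    have hBt : ∀ K ∈ t, BAlg L M A α β (B K) :=
      fun K hK => hB K (Finset.mem_insert_of_mem hK)
    have hrest := ih hBt
      (fun K hK K' hK' hne => hdisj K (Finset.mem_insert_of_mem hK)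
        K' (Finset.mem_insert_of_mem hK') hne)
    rw [← hrest]
    have hdisj2 : B a ∩ (⋃ K ∈ t, B K) = ∅ := by
      ext x
      simp only [Set.mem_inter_iff, Set.mem_iUnion, Set.mem_empty_iff_false, iff_false,
        not_and, not_exists]
      intro hxa K hK hxK
      have := hdisj a (Finset.mem_insert_self a t) K (Finset.mem_insert_of_mem hK)
        (fun h => hx (h ▸ hK))
      exact absurd (Set.mem_inter hxa hxK) (by rw [this]; exact Set.notMem_empty x)
    exact om.add_disjoint (hB a (Finset.mem_insert_self a t)).definable
      (BAlg.biUnion t B hBt).definable hdisj2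

end Uber

/-! ### Atoms of a finite family of `BAlg` sets -/

/-- The subtype of sets in the Boolean algebra `𝔹_{αβ}(A)`. -/
def BSet (L : FirstOrder.Language) (M : Type*) [L.Structure M] (A : Set M)
    (α β : Type*) := {S : Set (α ⊕ β → M) // BAlg L M A α β S}

section Atoms

variable {L : FirstOrder.Language} {M : Type*} [L.Structure M] {A : Set M} {α β : Type*}

/-- The atom of the finite family `s` determined by the "trace" `K ⊆ s`. -/
def atom (s K : Finset (BSet L M A α β)) : Set (α ⊕ β → M) :=
  {x | ∀ i ∈ s, (x ∈ i.val ↔ i ∈ K)}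

theorem atom_balg (s K : Finset (BSet L M A α β)) : BAlg L M A α β (atom s K) := by
  classical
  have : atom s K = ⋂ i ∈ s, (if i ∈ K then i.val else i.valᶜ) := by
    ext x
    simp only [atom, Set.mem_setOf_eq, Set.mem_iInter]
    refine forall_congr' fun i => forall_congr' fun hi => ?_
    split_ifs with h
    · simp [h]
    · simp [h, Set.mem_compl_iff]
  rw [this]
  refine BAlg.biInter s _ fun i hi => ?_
  split_ifs with h
  · exact i.2
  · exact BAlg.compl _ i.2

open Classical in
theorem mem_atom_filter (s : Finset (BSet L M A α β)) (x : α ⊕ β → M) :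
    x ∈ atom s (s.filter (fun i => x ∈ i.val)) := by
  intro i hi
  simp [Finset.mem_filter, hi]

open Classical in
theorem atom_eq_filter {s K : Finset (BSet L M A α β)} {x : α ⊕ β → M}
    (hx : x ∈ atom s K) (hK : K ⊆ s) : K = s.filter (fun i => x ∈ i.val) := by
  ext i
  simp only [Finset.mem_filter]
  constructor
  · intro hiK
    exact ⟨hK hiK, (hx i (hK hiK)).2 hiK⟩
  · rintro ⟨his, hxi⟩
    exact (hx i his).1 hxi

theorem atom_disjoint {s K K' : Finset (BSet L M A α β)} (hK : K ⊆ s) (hK' : K' ⊆ s)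
    (hne : K ≠ K') : atom s K ∩ atom s K' = ∅ := by
  classical
  ext x
  simp only [Set.mem_inter_iff, Set.mem_empty_iff_false, iff_false, not_and]
  intro h1 h2
  exact hne ((atom_eq_filter h1 hK).trans (atom_eq_filter h2 hK').symm)

open Classical in
theorem sum_indicator_eq (s : Finset (BSet L M A α β)) (c : BSet L M A α β → ℝ)
    (x : α ⊕ β → M) :
    ∑ i ∈ s, c i * Set.indicator i.val (fun _ => (1:ℝ)) x
      = ∑ i ∈ s.filter (fun i => x ∈ i.val), c i := by
  rw [Finset.sum_filter]
  refine Finset.sum_congr rfl fun i _ => ?_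
  by_cases h : x ∈ i.val <;> simp [Set.indicator_apply, h]

open Classical in
theorem measure_decomp (om : KeislerMeasure L M (Set.univ : Set M) (α ⊕ β))
    (s : Finset (BSet L M A α β)) {i : BSet L M A α β} (hi : i ∈ s) :
    om.toFun i.val
      = ∑ K ∈ s.powerset.filter (fun K => i ∈ K), om.toFun (atom s K) := by
  have hset : i.val = ⋃ K ∈ s.powerset.filter (fun K => i ∈ K), atom s K := by
    ext x
    simp only [Set.mem_iUnion, Finset.mem_filter, Finset.mem_powerset]
    constructor
    · intro hx
      exact ⟨s.filter (fun j => x ∈ j.val), ⟨Finset.filter_subset _ _,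
        Finset.mem_filter.2 ⟨hi, hx⟩⟩, mem_atom_filter s x⟩
    · rintro ⟨K, ⟨hKs, hiK⟩, hxK⟩
      exact (hxK i hi).2 hiK
  rw [hset]
  refine om.sum_disjoint_s13 _ _ (fun K _ => atom_balg s K) ?_
  rintro K hK K' hK' hne
  simp only [Finset.mem_filter, Finset.mem_powerset] at hK hK'
  exact atom_disjoint hK.1 hK'.1 hne

open Classical in
theorem sum_measure_eq (om : KeislerMeasure L M (Set.univ : Set M) (α ⊕ β))
    (s : Finset (BSet L M A α β)) (c : BSet L M A α β → ℝ) :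
    ∑ i ∈ s, c i * om.toFun i.val
      = ∑ K ∈ s.powerset, (∑ i ∈ K, c i) * om.toFun (atom s K) := by
  have step1 : ∀ i ∈ s, c i * om.toFun i.val
      = ∑ K ∈ s.powerset, (if i ∈ K then c i * om.toFun (atom s K) else 0) := by
    intro i hi
    rw [measure_decomp om s hi, Finset.mul_sum, ← Finset.sum_filter]
  rw [Finset.sum_congr rfl step1, Finset.sum_comm]
  refine Finset.sum_congr rfl fun K hK => ?_
  rw [Finset.mem_powerset] at hK
  have : ∑ i ∈ s, (if i ∈ K then c i * om.toFun (atom s K) else 0)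
      = (∑ i ∈ s, if i ∈ K then c i else 0) * om.toFun (atom s K) := by
    rw [Finset.sum_mul]
    refine Finset.sum_congr rfl fun i _ => ?_
    split_ifs <;> simp
  rw [this, ← Finset.sum_filter]
  congr 1
  rw [Finset.filter_mem_eq_inter, Finset.inter_eq_right.2 hK]

end Atoms

/-! ### The inner value and the key positivity lemma -/

section InnerVal

variable {L : FirstOrder.Language} {M : Type*} [L.Structure M] {α β : Type*}

/-- The inner value of a set `T` w.r.t. a measure `om`, approximating from inside
by sets of the algebra `𝔹_{αβ}(A)`. -/
noncomputable def innerVal (A : Set M) (om : KeislerMeasure L M (Set.univ : Set M) (α ⊕ β))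
    (T : Set (α ⊕ β → M)) : ℝ :=
  sSup {y | ∃ G : Set (α ⊕ β → M), BAlg L M A α β G ∧ G ⊆ T ∧ y = om.toFun G}

variable {A : Set M} (om : KeislerMeasure L M (Set.univ : Set M) (α ⊕ β))
  (T : Set (α ⊕ β → M))

theorem innerSet_nonempty :
    {y | ∃ G : Set (α ⊕ β → M), BAlg L M A α β G ∧ G ⊆ T ∧ y = om.toFun G}.Nonempty :=
  ⟨om.toFun ∅, ∅, BAlg.empty', Set.empty_subset T, rfl⟩

theorem innerSet_bddAbove :
    BddAbove {y | ∃ G : Set (α ⊕ β → M), BAlg L M A α β G ∧ G ⊆ T ∧ y = om.toFun G} := by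
  refine ⟨1, ?_⟩
  rintro y ⟨G, hG, _, rfl⟩
  exact om.le_one hG.definable

theorem le_innerVal {G : Set (α ⊕ β → M)} (hG : BAlg L M A α β G) (hGT : G ⊆ T) :
    om.toFun G ≤ innerVal A om T :=
  le_csSup (innerSet_bddAbove om T) ⟨G, hG, hGT, rfl⟩

theorem innerVal_le {b : ℝ}
    (hb : ∀ G : Set (α ⊕ β → M), BAlg L M A α β G → G ⊆ T → om.toFun G ≤ b) :
    innerVal A om T ≤ b := by
  refine csSup_le (innerSet_nonempty om T) ?_
  rintro y ⟨G, hG, hGT, rfl⟩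
  exact hb G hG hGT

theorem innerVal_nonneg : 0 ≤ innerVal A om T := by
  have := le_innerVal om T (BAlg.empty' (A := A)) (Set.empty_subset T)
  rwa [om.empty] at this

/-- The key positivity lemma: if a finite linear combination of indicators of
`𝔹`-sets plus `t` times the indicator of `T` is pointwise nonnegative, then the
corresponding combination of measures, with `innerVal` substituted for the
measure of `T`, is nonnegative. -/
theorem uber (s : Finset (BSet L M A α β)) (c : BSet L M A α β → ℝ) (t : ℝ)
    (h : ∀ x, 0 ≤ (∑ i ∈ s, c i * Set.indicator i.val (fun _ => (1:ℝ)) x)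
      + t * Set.indicator T (fun _ => (1:ℝ)) x) :
    0 ≤ (∑ i ∈ s, c i * om.toFun i.val) + t * innerVal A om T := by
  classical
  set sK : Finset (BSet L M A α β) → ℝ := fun K => ∑ i ∈ K, c i with hsK
  -- the pointwise value on a (nonempty) atom
  have hval : ∀ K ∈ s.powerset, ∀ x ∈ atom s K,
      0 ≤ sK K + t * Set.indicator T (fun _ => (1:ℝ)) x := by
    intro K hK x hx
    rw [Finset.mem_powerset] at hK
    have := h x
    rwa [sum_indicator_eq, ← atom_eq_filter hx hK] at this
  have hnn : ∀ K, 0 ≤ om.toFun (atom s K) :=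
    fun K => om.nonneg' _ (atom_balg s K).definable
  rw [sum_measure_eq om s c]
  rcases le_or_gt 0 t with ht | ht
  · -- t ≥ 0
    set 𝒦n : Finset (Finset (BSet L M A α β)) :=
      s.powerset.filter (fun K => sK K < 0 ∧ (atom s K).Nonempty) with h𝒦n
    have hsub : ∀ K ∈ 𝒦n, atom s K ⊆ T := by
      intro K hK x hx
      simp only [h𝒦n, Finset.mem_filter] at hK
      by_contra hxT
      have := hval K hK.1 x hx
      rw [Set.indicator_of_notMem hxT] at this
      simp only [mul_zero, add_zero] at this
      exact absurd hK.2.1 (not_lt.2 this)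
    have hge : ∀ K ∈ 𝒦n, -t ≤ sK K := by
      intro K hK
      simp only [h𝒦n, Finset.mem_filter] at hK
      obtain ⟨x, hx⟩ := hK.2.2
      have := hval K hK.1 x hx
      rw [Set.indicator_of_mem (hsub K (by simp only [h𝒦n, Finset.mem_filter]; exact hK) hx)]
        at this
      linarith
    set G : Set (α ⊕ β → M) := ⋃ K ∈ 𝒦n, atom s K with hG
    have hGb : BAlg L M A α β G := BAlg.biUnion _ _ fun K _ => atom_balg s K
    have hGT : G ⊆ T := by
      intro x hx
      rw [hG] at hx
      simp only [Set.mem_iUnion] at hx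
      obtain ⟨K, hK, hxK⟩ := hx
      exact hsub K hK hxK
    have hGm : om.toFun G = ∑ K ∈ 𝒦n, om.toFun (atom s K) := by
      refine om.sum_disjoint_s13 _ _ (fun K _ => atom_balg s K) ?_
      intro K hK K' hK' hne
      simp only [h𝒦n, Finset.mem_filter, Finset.mem_powerset] at hK hK'
      exact atom_disjoint hK.1 hK'.1 hne
    have step1 : ∑ K ∈ 𝒦n, sK K * om.toFun (atom s K)
        ≤ ∑ K ∈ s.powerset, sK K * om.toFun (atom s K) := by
      rw [← Finset.sum_filter_add_sum_filter_not s.powerset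
        (fun K => sK K < 0 ∧ (atom s K).Nonempty)]
      have : 0 ≤ ∑ K ∈ s.powerset.filter
          (fun K => ¬(sK K < 0 ∧ (atom s K).Nonempty)), sK K * om.toFun (atom s K) := by
        refine Finset.sum_nonneg fun K hK => ?_
        have hK2' := (Finset.mem_filter.1 hK).2
        rcases lt_or_ge (sK K) 0 with hK2 | hK2
        · have hempty : atom s K = ∅ :=
            Set.not_nonempty_iff_eq_empty.1 (fun hne => hK2' ⟨hK2, hne⟩)
          rw [hempty, om.empty, mul_zero]
        · exact mul_nonneg hK2 (hnn K)
      linarith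
    have step2 : ∑ K ∈ 𝒦n, (-t) * om.toFun (atom s K)
        ≤ ∑ K ∈ 𝒦n, sK K * om.toFun (atom s K) :=
      Finset.sum_le_sum fun K hK => mul_le_mul_of_nonneg_right (hge K hK) (hnn K)
    have step3 : (-t) * om.toFun G ≥ (-t) * innerVal A om T := by
      have h1 : om.toFun G ≤ innerVal A om T := le_innerVal om T hGb hGT
      nlinarith
    rw [hGm] at step3
    rw [Finset.mul_sum] at step3
    linarith
  · -- t < 0
    have hKpos : ∀ K ∈ s.powerset, (atom s K).Nonempty → 0 ≤ sK K := by
      rintro K hK ⟨x, hx⟩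
      have := hval K hK x hx
      by_cases hxT : x ∈ T
      · rw [Set.indicator_of_mem hxT] at this; nlinarith
      · rw [Set.indicator_of_notMem hxT] at this; linarith
    have hKT : ∀ K ∈ s.powerset, ∀ x, x ∈ atom s K → x ∈ T → -t ≤ sK K := by
      intro K hK x hx hxT
      have := hval K hK x hx
      rw [Set.indicator_of_mem hxT] at this
      linarith
    have hmain : ∀ G : Set (α ⊕ β → M), BAlg L M A α β G → G ⊆ T →
        (-t) * om.toFun G ≤ ∑ K ∈ s.powerset, sK K * om.toFun (atom s K) := by
      intro G hGb hGT
      have hdecomp : om.toFun G = ∑ K ∈ s.powerset, om.toFun (atom s K ∩ G) := by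
        have hset : G = ⋃ K ∈ s.powerset, (atom s K ∩ G) := by
          ext x
          simp only [Set.mem_iUnion, Set.mem_inter_iff]
          constructor
          · intro hx
            exact ⟨s.filter (fun j => x ∈ j.val),
              Finset.mem_powerset.2 (Finset.filter_subset _ _),
              mem_atom_filter s x, hx⟩
          · rintro ⟨K, _, _, hx⟩; exact hx
        conv_lhs => rw [hset]
        refine om.sum_disjoint_s13 _ _ (fun K _ => (atom_balg s K).inter hGb) ?_
        intro K hK K' hK' hne
        rw [Finset.mem_powerset] at hK hK'
        have := atom_disjoint hK hK' hne
        apply Set.eq_empty_of_subset_empty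
        intro x hx
        rw [← this]
        exact ⟨hx.1.1, hx.2.1⟩
      rw [hdecomp, Finset.mul_sum]
      refine Finset.sum_le_sum fun K hK => ?_
      rcases Set.eq_empty_or_nonempty (atom s K ∩ G) with hem | ⟨x, hx⟩
      · rw [hem, om.empty, mul_zero]
        rcases Set.eq_empty_or_nonempty (atom s K) with hem2 | hne2
        · rw [hem2, om.empty, mul_zero]
        · exact mul_nonneg (hKpos K hK hne2) (hnn K)
      · have h1 : -t ≤ sK K := hKT K hK x hx.1 (hGT hx.2)
        have h2 : om.toFun (atom s K ∩ G) ≤ om.toFun (atom s K) :=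
          om.mono ((atom_balg s K).inter hGb).definable (atom_balg s K).definable
            Set.inter_subset_left
        have h3 : 0 ≤ om.toFun (atom s K ∩ G) :=
          om.nonneg' _ ((atom_balg s K).inter hGb).definable
        nlinarith
    have hfin : (-t) * innerVal A om T ≤ ∑ K ∈ s.powerset, sK K * om.toFun (atom s K) := by
      rw [mul_comm, ← le_div_iff₀ (by linarith : (0:ℝ) < -t)]
      refine innerVal_le om T fun G hGb hGT => ?_
      rw [le_div_iff₀ (by linarith : (0:ℝ) < -t), mul_comm]
      exact hmain G hGb hGT
    linarith

end InnerVal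

/-! ### The Hahn–Banach extension construction -/

/-- The submodule of bounded real-valued functions on `X`. -/
def bddFuns (X : Type*) : Submodule ℝ (X → ℝ) where
  carrier := {f | ∃ C : ℝ, ∀ x, |f x| ≤ C}
  add_mem' := by
    rintro f g ⟨C, hC⟩ ⟨C', hC'⟩
    exact ⟨C + C', fun x => (abs_add_le _ _).trans (add_le_add (hC x) (hC' x))⟩
  zero_mem' := ⟨0, fun x => by simp⟩
  smul_mem' := by
    rintro c f ⟨C, hC⟩
    exact ⟨|c| * C, fun x => by
      rw [Pi.smul_apply, smul_eq_mul, abs_mul]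
      exact mul_le_mul_of_nonneg_left (hC x) (abs_nonneg c)⟩

/-- Indicator function of a set, with value `1`. -/
noncomputable def indFun {X : Type*} (S : Set X) : X → ℝ := S.indicator fun _ => 1

theorem indFun_mem_bddFuns {X : Type*} (S : Set X) : indFun S ∈ bddFuns X :=
  ⟨1, fun x => by
    by_cases h : x ∈ S <;>
      simp [indFun, Set.indicator_of_mem, Set.indicator_of_notMem, h]⟩

section HB
set_option maxHeartbeats 1000000

variable {L : FirstOrder.Language} {M : Type*} [L.Structure M] {A : Set M} {α β : Type*}

/-- Given any measure `om` in the extension space and any set `T`, there is a measure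
`om'` in the extension space whose value on `T` is the inner value of `T` w.r.t. `om`
and the algebra `𝔹_{αβ}(A)`. -/
theorem exists_extension_innerVal (lam : KeislerMeasure L M A (α ⊕ β))
    (mu : KeislerMeasure L M (Set.univ : Set M) α)
    (om : KeislerMeasure L M (Set.univ : Set M) (α ⊕ β))
    (hom : om ∈ extSpace L A lam mu) (T : Set (α ⊕ β → M)) :
    ∃ om' ∈ extSpace L A lam mu, om'.toFun T = innerVal A om T := by
  classical
  set r : ℝ := innerVal A om T with hr
  -- the index type and the two linear maps
  set gSet : Option (BSet L M A α β) → Set (α ⊕ β → M) := fun j => j.elim T Subtype.val with hgSet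
  set gVal : Option (BSet L M A α β) → ℝ :=
    fun j => j.elim r (fun i => om.toFun i.val) with hgVal
  set Θ0 : (Option (BSet L M A α β) →₀ ℝ) →ₗ[ℝ] ((α ⊕ β → M) → ℝ) :=
    Finsupp.linearCombination ℝ (fun j => indFun (gSet j)) with hΘ0
  set val1 : (Option (BSet L M A α β) →₀ ℝ) →ₗ[ℝ] ℝ :=
    Finsupp.linearCombination ℝ gVal with hval1
  -- the key positivity fact, via `uber`
  have key : ∀ v : Option (BSet L M A α β) →₀ ℝ, (∀ x, 0 ≤ Θ0 v x) → 0 ≤ val1 v := by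
    intro v hv
    have hΘrep : ∀ x, Θ0 v x = v none * Set.indicator T (fun _ => (1:ℝ)) x
        + ∑ i ∈ v.some.support, v.some i * Set.indicator i.val (fun _ => (1:ℝ)) x := by
      intro x
      rw [hΘ0]
      rw [Finsupp.linearCombination_option]
      simp only [Pi.add_apply, Pi.smul_apply, smul_eq_mul]
      congr 1
      rw [Finsupp.linearCombination_apply, Finsupp.sum]
      simp only [Finset.sum_apply, Pi.smul_apply, smul_eq_mul, Function.comp]
      rfl
    have hvrep : val1 v = v none * r + ∑ i ∈ v.some.support, v.some i * om.toFun i.val := by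
      rw [hval1, Finsupp.linearCombination_option]
      simp only [smul_eq_mul]
      congr 1
    rw [hvrep]
    have huber := uber om T v.some.support (fun i => v.some i) (v none) (fun x => by
      have h2 := hv x
      rw [hΘrep x] at h2
      linarith)
    linarith [huber]
  have hmono_key : ∀ v w : Option (BSet L M A α β) →₀ ℝ,
      (∀ x, Θ0 v x ≤ Θ0 w x) → val1 v ≤ val1 w := by
    intro v w h
    have := key (w - v) (fun x => by
      rw [map_sub]
      simp only [Pi.sub_apply]
      linarith [h x])
    rw [map_sub] at this
    linarith
  -- the universal element
  set uσ : Option (BSet L M A α β) := some ⟨Set.univ, BAlg.univ'⟩ with huσ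
  have hΘuniv : ∀ C : ℝ, ∀ x, Θ0 (Finsupp.single uσ C) x = C := by
    intro C x
    rw [hΘ0, Finsupp.linearCombination_single]
    simp [huσ, hgSet, indFun, Set.indicator_of_mem, Option.elim]
  have hvaluniv : ∀ C : ℝ, val1 (Finsupp.single uσ C) = C := by
    intro C
    rw [hval1, Finsupp.linearCombination_single]
    simp [huσ, hgVal, om.measure_univ, Option.elim]
  -- the sublinear functional
  set pset : ↥(bddFuns (α ⊕ β → M)) → Set ℝ :=
    fun f => val1 '' {v | ∀ x, (f : (α ⊕ β → M) → ℝ) x ≤ Θ0 v x} with hpset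
  set p : ↥(bddFuns (α ⊕ β → M)) → ℝ := fun f => sInf (pset f) with hp
  have hCf : ∀ f : ↥(bddFuns (α ⊕ β → M)), ∃ C : ℝ, 0 ≤ C ∧ ∀ x, |(f : (α ⊕ β → M) → ℝ) x| ≤ C := by
    rintro ⟨f, C, hC⟩
    exact ⟨max C 0, le_max_right _ _, fun x => (hC x).trans (le_max_left _ _)⟩
  have hne : ∀ f : ↥(bddFuns (α ⊕ β → M)), (pset f).Nonempty := by
    intro f
    obtain ⟨C, _, hC⟩ := hCf f
    exact ⟨val1 (Finsupp.single uσ C), ⟨Finsupp.single uσ C,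
      fun x => by rw [hΘuniv]; exact (abs_le.1 (hC x)).2, rfl⟩⟩
  have hbdd : ∀ f : ↥(bddFuns (α ⊕ β → M)), BddBelow (pset f) := by
    intro f
    obtain ⟨C, _, hC⟩ := hCf f
    refine ⟨-C, ?_⟩
    rintro y ⟨v, hv, rfl⟩
    have := hmono_key (Finsupp.single uσ (-C)) v (fun x => by
      rw [hΘuniv]
      exact le_trans (neg_le_of_abs_le (hC x)) (hv x))
    rwa [hvaluniv] at this
  have hp_le : ∀ (f : ↥(bddFuns (α ⊕ β → M))) (v), (∀ x, (f : (α ⊕ β → M) → ℝ) x ≤ Θ0 v x) → p f ≤ val1 v :=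
    fun f v hv => csInf_le (hbdd f) ⟨v, hv, rfl⟩
  have hle_p : ∀ (f : ↥(bddFuns (α ⊕ β → M))) (b : ℝ),
      (∀ v, (∀ x, (f : (α ⊕ β → M) → ℝ) x ≤ Θ0 v x) → b ≤ val1 v) → b ≤ p f := by
    intro f b hb
    refine le_csInf (hne f) ?_
    rintro y ⟨v, hv, rfl⟩
    exact hb v hv
  -- sublinearity
  have N_add : ∀ f g : ↥(bddFuns (α ⊕ β → M)), p (f + g) ≤ p f + p g := by
    intro f g
    have h1 : ∀ y ∈ pset f, ∀ z ∈ pset g, p (f + g) ≤ y + z := by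
      rintro y ⟨v, hv, rfl⟩ z ⟨w, hw, rfl⟩
      have : p (f + g) ≤ val1 (v + w) := by
        refine hp_le _ _ (fun x => ?_)
        rw [map_add]
        simp only [Pi.add_apply, Submodule.coe_add]
        exact add_le_add (hv x) (hw x)
      rwa [map_add] at this
    have h2 : ∀ y ∈ pset f, p (f + g) - y ≤ p g := by
      intro y hy
      refine le_csInf (hne g) (fun z hz => ?_)
      linarith [h1 y hy z hz]
    have h3 : p (f + g) - p g ≤ p f := by
      refine le_csInf (hne f) (fun y hy => ?_)
      linarith [h2 y hy]
    linarith
  have hsmul_le : ∀ c : ℝ, 0 < c → ∀ f : ↥(bddFuns (α ⊕ β → M)), p (c • f) ≤ c * p f := by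
    intro c hc f
    have hstep : p (c • f) / c ≤ p f := by
      refine le_csInf (hne f) ?_
      rintro y ⟨v, hv, rfl⟩
      rw [div_le_iff₀ hc, mul_comm]
      have : p (c • f) ≤ val1 (c • v) := by
        refine hp_le _ _ (fun x => ?_)
        rw [map_smul]
        simp only [Pi.smul_apply, Submodule.coe_smul, smul_eq_mul]
        exact mul_le_mul_of_nonneg_left (hv x) hc.le
      rwa [map_smul, smul_eq_mul] at this
    linarith [(div_le_iff₀' hc).1 hstep]
  have N_hom : ∀ c : ℝ, 0 < c → ∀ f : ↥(bddFuns (α ⊕ β → M)), p (c • f) = c * p f := by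
    intro c hc f
    refine le_antisymm (hsmul_le c hc f) ?_
    have := hsmul_le c⁻¹ (by positivity) (c • f)
    rw [inv_smul_smul₀ (ne_of_gt hc)] at this
    calc c * p f ≤ c * (c⁻¹ * p (c • f)) := by
          exact mul_le_mul_of_nonneg_left this hc.le
      _ = p (c • f) := by field_simp
  -- the partial linear functional
  set Θ : (Option (BSet L M A α β) →₀ ℝ) →ₗ[ℝ] ↥(bddFuns (α ⊕ β → M)) :=
    Θ0.codRestrict (bddFuns (α ⊕ β → M)) (fun v => by
      refine ⟨∑ j ∈ v.support, |v j|, fun x => ?_⟩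
      rw [hΘ0, Finsupp.linearCombination_apply, Finsupp.sum]
      calc |(∑ j ∈ v.support, v j • indFun (gSet j)) x|
          = |∑ j ∈ v.support, v j * indFun (gSet j) x| := by
            simp [Finset.sum_apply]
        _ ≤ ∑ j ∈ v.support, |v j * indFun (gSet j) x| := Finset.abs_sum_le_sum_abs _ _
        _ ≤ ∑ j ∈ v.support, |v j| := by
            refine Finset.sum_le_sum (fun j _ => ?_)
            rw [abs_mul]
            have : |indFun (gSet j) x| ≤ 1 := by
              by_cases h : x ∈ gSet j <;>
                simp [indFun, Set.indicator_of_mem, Set.indicator_of_notMem, h]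
            nlinarith [abs_nonneg (v j)]) with hΘ
  have hΘcoe : ∀ v, ((Θ v : ↥(bddFuns (α ⊕ β → M))) : (α ⊕ β → M) → ℝ) = Θ0 v := fun v => rfl
  have hker : LinearMap.ker Θ ≤ LinearMap.ker val1 := by
    intro v hv
    rw [LinearMap.mem_ker] at hv ⊢
    have hv0 : ∀ x, Θ0 v x = 0 := by
      intro x
      have : ((Θ v : ↥(bddFuns (α ⊕ β → M))) : (α ⊕ β → M) → ℝ) x = 0 := by rw [hv]; rfl
      rwa [hΘcoe] at this
    have h1 := key v (fun x => le_of_eq (hv0 x).symm)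
    have h2 := key (-v) (fun x => by rw [map_neg]; simp [hv0 x])
    rw [map_neg] at h2
    linarith
  set ψ : ↥(LinearMap.range Θ) →ₗ[ℝ] ℝ :=
    (Submodule.liftQ (LinearMap.ker Θ) val1 hker).comp
      (LinearMap.quotKerEquivRange Θ).symm.toLinearMap with hψdef
  have hψ : ∀ v, ψ ⟨Θ v, LinearMap.mem_range_self Θ v⟩ = val1 v := by
    intro v
    rw [hψdef]
    simp only [LinearMap.coe_comp, Function.comp_apply, LinearEquiv.coe_toLinearMap]
    rw [LinearMap.quotKerEquivRange_symm_apply_image, Submodule.mkQ_apply,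
      Submodule.liftQ_apply]
  -- apply Hahn–Banach
  set fPMap : ↥(bddFuns (α ⊕ β → M)) →ₗ.[ℝ] ℝ := ⟨LinearMap.range Θ, ψ⟩ with hfPMap
  have hψ' : ∀ (v) (h : Θ v ∈ LinearMap.range Θ),
      (fPMap ⟨Θ v, h⟩ : ℝ) = val1 v := fun v h => hψ v
  have hf : ∀ x : fPMap.domain, fPMap x ≤ p x := by
    rintro ⟨x, hx⟩
    obtain ⟨v, rfl⟩ := hx
    have h1 : (fPMap ⟨Θ v, LinearMap.mem_range_self Θ v⟩ : ℝ) = val1 v := hψ v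
    have h2 : val1 v ≤ p ((⟨Θ v, LinearMap.mem_range_self Θ v⟩ :
        fPMap.domain) : ↥(bddFuns (α ⊕ β → M))) := by
      refine hle_p _ _ (fun w hw => ?_)
      refine hmono_key v w (fun x => ?_)
      have h3 := hw x
      rwa [hΘcoe] at h3
    calc (fPMap ⟨Θ v, LinearMap.mem_range_self Θ v⟩ : ℝ) = val1 v := h1
      _ ≤ _ := h2
  obtain ⟨g, hg1, hg2⟩ := exists_extension_of_le_sublinear fPMap p N_hom N_add hf
  -- the resulting measure
  set indE : Set (α ⊕ β → M) → ↥(bddFuns (α ⊕ β → M)) := fun S => ⟨indFun S, indFun_mem_bddFuns S⟩ with hindE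
  have hgval : ∀ (S : Set (α ⊕ β → M)), BAlg L M A α β S → g (indE S) = om.toFun S := by
    intro S hS
    have hrep : indE S = Θ (Finsupp.single (some ⟨S, hS⟩) 1) := by
      refine Subtype.ext ?_
      rw [hΘcoe, hΘ0, Finsupp.linearCombination_single, one_smul]
      rfl
    have := hg1 ⟨Θ (Finsupp.single (some ⟨S, hS⟩) 1),
      LinearMap.mem_range_self Θ _⟩
    rw [hrep, this, hψ']
    rw [hval1, Finsupp.linearCombination_single, one_smul]
    rfl
  have hgT : g (indE T) = r := by
    have hrep : indE T = Θ (Finsupp.single none 1) := by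
      refine Subtype.ext ?_
      rw [hΘcoe, hΘ0, Finsupp.linearCombination_single, one_smul]
      rfl
    have := hg1 ⟨Θ (Finsupp.single none 1), LinearMap.mem_range_self Θ _⟩
    rw [hrep, this, hψ']
    rw [hval1, Finsupp.linearCombination_single, one_smul]
    rfl
  have hg_nonneg : ∀ S : Set (α ⊕ β → M), 0 ≤ g (indE S) := by
    intro S
    have h1 : g (-(indE S)) ≤ p (-(indE S)) := hg2 _
    have h2 : p (-(indE S)) ≤ val1 0 := by
      refine hp_le _ _ (fun x => ?_)
      rw [map_zero]
      simp only [Pi.zero_apply]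
      have : (0:ℝ) ≤ indFun S x := by
        by_cases h : x ∈ S <;>
          simp [indFun, Set.indicator_of_mem, Set.indicator_of_notMem, h]
      calc ((-(indE S) : ↥(bddFuns (α ⊕ β → M))) : (α ⊕ β → M) → ℝ) x = -(indFun S x) := rfl
        _ ≤ 0 := by linarith
    rw [map_neg] at h1
    rw [map_zero] at h2
    linarith
  -- indicator identities
  have hind_compl : ∀ S : Set (α ⊕ β → M), indE Sᶜ = indE Set.univ - indE S := by
    intro S
    refine Subtype.ext (funext fun x => ?_)
    show indFun Sᶜ x = indFun Set.univ x - indFun S x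
    by_cases h : x ∈ S <;>
      simp [indFun, Set.indicator_of_mem, Set.indicator_of_notMem, h, Set.mem_compl_iff]
  have hind_union : ∀ S S' : Set (α ⊕ β → M),
      indE (S ∪ S') = indE S + indE S' - indE (S ∩ S') := by
    intro S S'
    refine Subtype.ext (funext fun x => ?_)
    show indFun (S ∪ S') x = indFun S x + indFun S' x - indFun (S ∩ S') x
    by_cases h : x ∈ S <;> by_cases h' : x ∈ S' <;>
      simp [indFun, Set.indicator_apply, h, h']
  have hguniv : g (indE Set.univ) = 1 := by
    rw [hgval Set.univ BAlg.univ', om.measure_univ]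
  set om' : KeislerMeasure L M (Set.univ : Set M) (α ⊕ β) :=
    { toFun := fun S => g (indE S)
      measure_univ := hguniv
      nonneg' := fun S _ => hg_nonneg S
      compl' := fun S _ => by
        show g (indE Sᶜ) = 1 - g (indE S)
        rw [hind_compl S, map_sub, hguniv]
      union_inter' := fun S S' _ _ => by
        show g (indE (S ∪ S')) = g (indE S) + g (indE S') - g (indE (S ∩ S'))
        rw [hind_union S S', map_sub, map_add] } with hom'
  refine ⟨om', ⟨?_, ?_⟩, ?_⟩
  · intro S hS
    have h1 : om'.toFun S = om.toFun S := hgval S (BAlg.base S hS)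
    rw [h1, hom.1 S hS]
  · intro Y hY
    have h1 : om'.toFun (cyl Sum.inl Y) = om.toFun (cyl Sum.inl Y) :=
      hgval _ (BAlg.cylinder Y hY)
    rw [h1, hom.2 Y hY]
  · exact hgT

end HB

/-! ### The compactness (ultrafilter limit) argument -/

section Limit

variable {L : FirstOrder.Language} {M : Type*} [L.Structure M] {A : Set M} {α β : Type*}

set_option maxHeartbeats 1000000 in
/-- The key lemma: a uniform lower approximation of `cyl Sum.inr D` by a single
element of the algebra `𝔹_{αβ}(A)`. -/
theorem exists_lower_approx (lam : KeislerMeasure L M A (α ⊕ β))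
    (mu : KeislerMeasure L M (Set.univ : Set M) α)
    (nu : KeislerMeasure L M (Set.univ : Set M) β)
    (hwit : ∀ om ∈ extSpace L A lam mu, ∀ Y : Set (β → M),
      (Set.univ : Set M).Definable L Y → om.toFun (cyl Sum.inr Y) = nu.toFun Y)
    (D : Set (β → M)) (hD : (Set.univ : Set M).Definable L D) (ε : ℝ) (hε : 0 < ε) :
    ∃ Gm : Set (α ⊕ β → M), BAlg L M A α β Gm ∧ Gm ⊆ cyl Sum.inr D ∧
      ∀ om ∈ extSpace L A lam mu, nu.toFun D - ε < om.toFun Gm := by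
  classical
  by_contra hcon
  push_neg at hcon
  -- for each candidate `G` there is a bad measure
  have h : ∀ G : Set (α ⊕ β → M), BAlg L M A α β G → G ⊆ cyl Sum.inr D →
      ∃ om ∈ extSpace L A lam mu, om.toFun G ≤ nu.toFun D - ε := by
    intro G hG hGD
    obtain ⟨om, hom, hle⟩ := hcon G hG hGD
    exact ⟨om, hom, hle⟩
  set ι := {G : Set (α ⊕ β → M) // BAlg L M A α β G ∧ G ⊆ cyl Sum.inr D} with hι
  letI : SemilatticeSup ι :=
    { le := fun G G' => G.1 ⊆ G'.1
      le_refl := fun G => subset_rfl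
      le_trans := fun a b c h1 h2 => Set.Subset.trans h1 h2
      le_antisymm := fun a b h1 h2 => Subtype.ext (subset_antisymm h1 h2)
      sup := fun G G' => ⟨G.1 ∪ G'.1, BAlg.union _ _ G.2.1 G'.2.1,
        Set.union_subset G.2.2 G'.2.2⟩
      le_sup_left := fun a b => Set.subset_union_left
      le_sup_right := fun a b => Set.subset_union_right
      sup_le := fun a b c h1 h2 => Set.union_subset h1 h2 }
  haveI : Nonempty ι := ⟨⟨∅, BAlg.empty', Set.empty_subset _⟩⟩
  have hatTop : (Filter.atTop : Filter ι).NeBot := Filter.atTop_neBot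
  set U : Ultrafilter ι := @Ultrafilter.of ι Filter.atTop hatTop with hU
  have hUle : (U : Filter ι) ≤ (Filter.atTop : Filter ι) := Ultrafilter.of_le _
  choose omf homE homle using fun G : ι => h G.1 G.2.1 G.2.2
  -- the clamped evaluation functions
  set Fev : Set (α ⊕ β → M) → ι → ℝ :=
    fun S G => max 0 (min 1 ((omf G).toFun S)) with hFev
  have hFmem : ∀ S G, Fev S G ∈ Set.Icc (0:ℝ) 1 := by
    intro S G
    simp only [hFev]
    constructor
    · exact le_max_left 0 _
    · rcases le_or_gt ((omf G).toFun S) 1 with h1 | h1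
      · rw [min_eq_right h1]
        rcases le_or_gt 0 ((omf G).toFun S) with h2 | h2
        · rw [max_eq_right h2]; exact h1
        · rw [max_eq_left h2.le]; exact zero_le_one
      · rw [min_eq_left h1.le]
        rw [max_eq_right zero_le_one]
  have hFdef : ∀ S, (Set.univ : Set M).Definable L S → ∀ G, Fev S G = (omf G).toFun S := by
    intro S hS G
    have h1 := (omf G).mem_Icc hS
    simp only [hFev]
    rw [min_eq_right h1.2, max_eq_right h1.1]
  -- the ultrafilter limits
  have hlimex : ∀ S : Set (α ⊕ β → M), ∃ a : ℝ,
      Filter.Tendsto (Fev S) (U : Filter ι) (nhds a) := by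
    intro S
    have hmem : Set.Icc (0:ℝ) 1 ∈ Ultrafilter.map (Fev S) U :=
      Filter.mem_map.2 (Filter.univ_mem' (fun G => hFmem S G))
    obtain ⟨a, _, ha⟩ := (isCompact_Icc (a := (0:ℝ)) (b := 1)).ultrafilter_le_nhds
      (Ultrafilter.map (Fev S) U) (Filter.le_principal_iff.2 hmem)
    exact ⟨a, ha⟩
  choose lim hlim using hlimex
  have huniq : ∀ S b, Filter.Tendsto (Fev S) (U : Filter ι) (nhds b) → lim S = b :=
    fun S b hb => tendsto_nhds_unique (hlim S) hb
  -- the limit measure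
  set omstar : KeislerMeasure L M (Set.univ : Set M) (α ⊕ β) :=
    { toFun := lim
      measure_univ := by
        refine huniq Set.univ 1 ?_
        have : ∀ G, Fev Set.univ G = 1 := by
          intro G
          rw [hFdef Set.univ Set.definable_univ G, (omf G).measure_univ]
        exact Filter.Tendsto.congr (fun G => (this G).symm) tendsto_const_nhds
      nonneg' := fun S _ => by
        refine ge_of_tendsto (hlim S) (Filter.univ_mem' (fun G => (hFmem S G).1))
      compl' := fun S hS => by
        refine huniq Sᶜ (1 - lim S) ?_
        have : ∀ G, Fev Sᶜ G = 1 - Fev S G := by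
          intro G
          rw [hFdef Sᶜ hS.compl G, hFdef S hS G, (omf G).compl' S hS]
        exact Filter.Tendsto.congr (fun G => (this G).symm)
          (Filter.Tendsto.sub tendsto_const_nhds (hlim S))
      union_inter' := fun S S' hS hS' => by
        refine huniq (S ∪ S') (lim S + lim S' - lim (S ∩ S')) ?_
        have : ∀ G, Fev (S ∪ S') G = Fev S G + Fev S' G - Fev (S ∩ S') G := by
          intro G
          rw [hFdef (S ∪ S') (hS.union hS') G, hFdef S hS G, hFdef S' hS' G,
            hFdef (S ∩ S') (hS.inter hS') G, (omf G).union_inter' S S' hS hS']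
        exact Filter.Tendsto.congr (fun G => (this G).symm)
          (Filter.Tendsto.sub (Filter.Tendsto.add (hlim S) (hlim S')) (hlim (S ∩ S'))) }
    with homstar
  have homstar_mem : omstar ∈ extSpace L A lam mu := by
    constructor
    · intro S hS
      refine huniq S (lam.toFun S) ?_
      have : ∀ G, Fev S G = lam.toFun S := by
        intro G
        rw [hFdef S (hS.mono (Set.subset_univ A)) G, (homE G).1 S hS]
      exact Filter.Tendsto.congr (fun G => (this G).symm) tendsto_const_nhds
    · intro Y hY
      refine huniq (cyl Sum.inl Y) (mu.toFun Y) ?_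
      have : ∀ G, Fev (cyl Sum.inl Y) G = mu.toFun Y := by
        intro G
        rw [hFdef _ (cyl_definable Sum.inl hY) G, (homE G).2 Y hY]
      exact Filter.Tendsto.congr (fun G => (this G).symm) tendsto_const_nhds
  -- the limit measure is uniformly small on all candidates
  have hsmall : ∀ G0 : ι, lim G0.1 ≤ nu.toFun D - ε := by
    intro G0
    refine le_of_tendsto (hlim G0.1) ?_
    have hev : {G : ι | G0 ≤ G} ∈ (U : Filter ι) := hUle (Filter.Ici_mem_atTop G0)
    refine Filter.mem_of_superset hev ?_
    intro G hG
    have h1 : Fev G0.1 G = (omf G).toFun G0.1 := hFdef G0.1 G0.2.1.definable G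
    have h2 : (omf G).toFun G0.1 ≤ (omf G).toFun G.1 :=
      (omf G).mono G0.2.1.definable G.2.1.definable hG
    have h3 := homle G
    simp only [Set.mem_setOf_eq]
    rw [h1]
    linarith
  -- hence the inner value of `cyl Sum.inr D` w.r.t. `omstar` is small
  have hinner : innerVal A omstar (cyl Sum.inr D) ≤ nu.toFun D - ε := by
    refine innerVal_le omstar _ (fun G hG hGD => ?_)
    exact hsmall ⟨G, hG, hGD⟩
  -- extend to a measure giving `cyl Sum.inr D` exactly this inner value
  obtain ⟨om', hom', heq⟩ := exists_extension_innerVal lam mu omstar homstar_mem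
    (cyl Sum.inr D)
  have hval := hwit om' hom' D hD
  rw [heq] at hval
  linarith [hval, hinner]

end Limit
/-- Uniform approximation property: if `λ` witnesses `μ ≥_{E,A} ν`, then for every
globally definable `D ∈ L_β(M)` and every `ε > 0` there are `G_ε⁻, G_ε⁺ ∈ 𝔹_{αβ}(A)`,
independent of `ω`, with `G_ε⁻ ⊆ M^α × D ⊆ G_ε⁺`, such that for every `ω ∈ E(λ,μ)`,
`ω(G_ε⁺) − ω(G_ε⁻) < ε` and `|ω(G_ε^±) − ν(D)| < ε`. -/
theorem extDom_uniform_approximation {L : FirstOrder.Language} {M : Type*}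
    [L.Structure M] (A : Set M) {α β : Type*}
    (mu : KeislerMeasure L M (Set.univ : Set M) α)
    (nu : KeislerMeasure L M (Set.univ : Set M) β)
    (lam : KeislerMeasure L M A (α ⊕ β))
    (hmarg : ∀ X : Set (α → M), A.Definable L X →
      lam.toFun (cyl Sum.inl X) = mu.toFun X)
    (hwit : ∀ om ∈ extSpace L A lam mu, ∀ Y : Set (β → M),
      (Set.univ : Set M).Definable L Y → om.toFun (cyl Sum.inr Y) = nu.toFun Y) :
    ∀ D : Set (β → M), (Set.univ : Set M).Definable L D → ∀ ε : ℝ, 0 < ε →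
      ∃ Gm Gp : Set (α ⊕ β → M), BAlg L M A α β Gm ∧ BAlg L M A α β Gp ∧
        Gm ⊆ cyl Sum.inr D ∧ cyl Sum.inr D ⊆ Gp ∧
        (∀ om ∈ extSpace L A lam mu, om.toFun Gp - om.toFun Gm < ε) ∧
        (∀ om ∈ extSpace L A lam mu,
          |om.toFun Gm - nu.toFun D| < ε ∧ |om.toFun Gp - nu.toFun D| < ε) := by
  intro D hD ε hε
  obtain ⟨Gm, hGmB, hGmsub, hGmlb⟩ :=
    exists_lower_approx lam mu nu hwit D hD (ε/2) (by linarith)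
  obtain ⟨Gm', hGm'B, hGm'sub, hGm'lb⟩ :=
    exists_lower_approx lam mu nu hwit Dᶜ hD.compl (ε/2) (by linarith)
  have dGm := hGmB.definable
  have dGm' := hGm'B.definable
  have dcyl : (Set.univ : Set M).Definable L (cyl Sum.inr D) :=
    cyl_definable (Sum.inr : β → α ⊕ β) hD
  have dcylc : (Set.univ : Set M).Definable L (cyl Sum.inr Dᶜ) :=
    cyl_definable (Sum.inr : β → α ⊕ β) hD.compl
  -- the key facts for an arbitrary `om` in the extension space
  have hfacts : ∀ om ∈ extSpace L A lam mu,
      nu.toFun D - ε/2 < om.toFun Gm ∧ om.toFun Gm ≤ nu.toFun D ∧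
      nu.toFun D ≤ om.toFun Gm'ᶜ ∧ om.toFun Gm'ᶜ < nu.toFun D + ε/2 := by
    intro om hom
    have hDval : om.toFun (cyl Sum.inr D) = nu.toFun D := hwit om hom D hD
    have hDcval : om.toFun (cyl Sum.inr Dᶜ) = nu.toFun Dᶜ := hwit om hom Dᶜ hD.compl
    have hnuc : nu.toFun Dᶜ = 1 - nu.toFun D := nu.compl' D hD
    have h1 : om.toFun Gm ≤ nu.toFun D := by
      have := om.mono dGm dcyl hGmsub
      rwa [hDval] at this
    have h2 : om.toFun Gm' ≤ 1 - nu.toFun D := by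
      have := om.mono dGm' dcylc hGm'sub
      rwa [hDcval, hnuc] at this
    have h3 : om.toFun Gm'ᶜ = 1 - om.toFun Gm' := om.compl' Gm' dGm'
    have h4 := hGmlb om hom
    have h5 := hGm'lb om hom
    rw [hnuc] at h5
    exact ⟨h4, h1, by linarith, by linarith⟩
  refine ⟨Gm, Gm'ᶜ, hGmB, BAlg.compl _ hGm'B, hGmsub, ?_, ?_, ?_⟩
  · intro x hx
    exact fun hx' => hGm'sub hx' hx
  · intro om hom
    obtain ⟨h1, h2, h3, h4⟩ := hfacts om hom
    linarith
  · intro om hom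
    obtain ⟨h1, h2, h3, h4⟩ := hfacts om hom
    constructor
    · rw [abs_lt]; constructor <;> linarith
    · rw [abs_lt]; constructor <;> linarith
end
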